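/- arXiv:2102.12229 — 5 statements merged into one kernel-verified Lean document; each statement's English description precedes it below -/
import Mathlib

section
/- Let N ≥ 1, Δx = 1/(N+1), and let L_N be the N×N matrix (1/Δx²)·tridiag(1,−2,1). For every τ > 0 and every nonzero z ∈ ℂ with z = |z|e^{iθ}, |θ| < π, the matrix zI − τL_N is invertible and ‖(zI − τL_N)⁻¹‖_∞ ≤ sec(θ/2)/|z|. -/
open scoped BigOperators

/-- The `N × N` matrix `(1/Δx²)·tridiag(1, −2, 1)` with `Δx = 1/(N+1)`. -/
noncomputable def lmat (N : ℕ) : Matrix (Fin N) (Fin N) ℝ :=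
  Matrix.of fun i j =>
    ((N : ℝ) + 1) ^ 2 *
      (if (i : ℕ) = (j : ℕ) then (-2 : ℝ)
       else if (i : ℕ) + 1 = (j : ℕ) ∨ (j : ℕ) + 1 = (i : ℕ) then 1 else 0)

/-- The matrix norm induced by the maximum norm: maximum absolute row sum. -/
noncomputable def matNormC {ι : Type*} [Fintype ι] (A : Matrix ι ι ℂ) : ℝ :=
  ⨆ i, ∑ j, ‖A i j‖




noncomputable def gfun (N : ℕ) (l κC : ℂ) (a b : ℕ) : ℂ :=
  l ^ (max a b - min a b) * (1 - l ^ (2 * min a b)) * (1 - l ^ (2 * (N + 1) - 2 * max a b)) *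
    (l / (κC * (1 - l ^ 2) * (1 - l ^ (2 * (N + 1)))))

lemma gfun_left_zero (N : ℕ) (l κC : ℂ) (b : ℕ) : gfun N l κC 0 b = 0 := by
  simp [gfun]

lemma gfun_left_top (N : ℕ) (l κC : ℂ) (b : ℕ) (hb : b ≤ N + 1) :
    gfun N l κC (N + 1) b = 0 := by
  unfold gfun
  rw [max_eq_left hb, Nat.sub_self]
  simp

lemma gfun_rec (N : ℕ) (l z κC : ℂ) (hκ : κC ≠ 0) (hl2 : 1 - l ^ 2 ≠ 0)
    (hlN : 1 - l ^ (2 * (N + 1)) ≠ 0)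
    (hq : z * l = κC * (1 - l) ^ 2)
    (I K : ℕ) (hI1 : 1 ≤ I) (hIN : I ≤ N) (hK1 : 1 ≤ K) (hKN : K ≤ N) :
    (z + 2 * κC) * gfun N l κC I K - κC * gfun N l κC (I - 1) K - κC * gfun N l κC (I + 1) K
      = if I = K then 1 else 0 := by
  have powsplit : ∀ a b c : ℕ, a = b + c → l ^ a = l ^ b * l ^ c := by
    intro a b c h; rw [h, pow_add]
  rcases lt_trichotomy I K with h | h | h
  · rw [if_neg (by omega)]
    have e1 : gfun N l κC I K =
        l ^ (K - (I + 1)) * l * (1 - l ^ (2 * (I - 1)) * l ^ 2) *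
          (1 - l ^ (2 * (N + 1) - 2 * K)) *
          (l / (κC * (1 - l ^ 2) * (1 - l ^ (2 * (N + 1))))) := by
      unfold gfun
      rw [max_eq_right h.le, min_eq_left h.le,
        powsplit (K - I) (K - (I + 1)) 1 (by omega), pow_one,
        powsplit (2 * I) (2 * (I - 1)) 2 (by omega)]
    have e2 : gfun N l κC (I - 1) K =
        l ^ (K - (I + 1)) * l ^ 2 * (1 - l ^ (2 * (I - 1))) *
          (1 - l ^ (2 * (N + 1) - 2 * K)) *
          (l / (κC * (1 - l ^ 2) * (1 - l ^ (2 * (N + 1))))) := by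
      unfold gfun
      rw [max_eq_right (by omega : I - 1 ≤ K), min_eq_left (by omega : I - 1 ≤ K),
        powsplit (K - (I - 1)) (K - (I + 1)) 2 (by omega)]
    have e3 : gfun N l κC (I + 1) K =
        l ^ (K - (I + 1)) * (1 - l ^ (2 * (I - 1)) * l ^ 4) *
          (1 - l ^ (2 * (N + 1) - 2 * K)) *
          (l / (κC * (1 - l ^ 2) * (1 - l ^ (2 * (N + 1))))) := by
      unfold gfun
      rw [max_eq_right (by omega : I + 1 ≤ K), min_eq_left (by omega : I + 1 ≤ K),
        powsplit (2 * (I + 1)) (2 * (I - 1)) 4 (by omega)]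
    rw [e1, e2, e3]
    linear_combination (l ^ (K - (I + 1)) * (1 - l ^ (2 * (I - 1)) * l ^ 2) *
      (1 - l ^ (2 * (N + 1) - 2 * K)) *
      (l / (κC * (1 - l ^ 2) * (1 - l ^ (2 * (N + 1)))))) * hq
  · subst h
    rw [if_pos rfl]
    have e1 : gfun N l κC I I =
        (1 - l ^ (2 * (I - 1)) * l ^ 2) * (1 - l ^ (2 * (N + 1) - 2 * (I + 1)) * l ^ 2) *
          (l / (κC * (1 - l ^ 2) *
            (1 - l ^ (2 * (I - 1)) * l ^ (2 * (N + 1) - 2 * (I + 1)) * l ^ 4))) := by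
      unfold gfun
      rw [max_self, min_self, Nat.sub_self, pow_zero, one_mul,
        powsplit (2 * (N + 1) - 2 * I) (2 * (N + 1) - 2 * (I + 1)) 2 (by omega),
        powsplit (2 * I) (2 * (I - 1)) 2 (by omega),
        show l ^ (2 * (N + 1)) = l ^ (2 * (I - 1)) * l ^ (2 * (N + 1) - 2 * (I + 1)) * l ^ 4 by
          rw [← pow_add, ← pow_add]; congr 1; omega]
    have e2 : gfun N l κC (I - 1) I =
        l * (1 - l ^ (2 * (I - 1))) * (1 - l ^ (2 * (N + 1) - 2 * (I + 1)) * l ^ 2) *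
          (l / (κC * (1 - l ^ 2) *
            (1 - l ^ (2 * (I - 1)) * l ^ (2 * (N + 1) - 2 * (I + 1)) * l ^ 4))) := by
      unfold gfun
      rw [max_eq_right (by omega : I - 1 ≤ I), min_eq_left (by omega : I - 1 ≤ I),
        show I - (I - 1) = 1 by omega, pow_one,
        powsplit (2 * (N + 1) - 2 * I) (2 * (N + 1) - 2 * (I + 1)) 2 (by omega),
        show l ^ (2 * (N + 1)) = l ^ (2 * (I - 1)) * l ^ (2 * (N + 1) - 2 * (I + 1)) * l ^ 4 by
          rw [← pow_add, ← pow_add]; congr 1; omega]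
    have e3 : gfun N l κC (I + 1) I =
        l * (1 - l ^ (2 * (I - 1)) * l ^ 2) * (1 - l ^ (2 * (N + 1) - 2 * (I + 1))) *
          (l / (κC * (1 - l ^ 2) *
            (1 - l ^ (2 * (I - 1)) * l ^ (2 * (N + 1) - 2 * (I + 1)) * l ^ 4))) := by
      unfold gfun
      rw [max_eq_left (by omega : I ≤ I + 1), min_eq_right (by omega : I ≤ I + 1),
        show I + 1 - I = 1 by omega, pow_one,
        powsplit (2 * I) (2 * (I - 1)) 2 (by omega),
        show l ^ (2 * (N + 1)) = l ^ (2 * (I - 1)) * l ^ (2 * (N + 1) - 2 * (I + 1)) * l ^ 4 by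
          rw [← pow_add, ← pow_add]; congr 1; omega]
    have hlN' : 1 - l ^ (2 * (I - 1)) * l ^ (2 * (N + 1) - 2 * (I + 1)) * l ^ 4 ≠ 0 := by
      rw [show l ^ (2 * (N + 1)) = l ^ (2 * (I - 1)) * l ^ (2 * (N + 1) - 2 * (I + 1)) * l ^ 4 by
        rw [← pow_add, ← pow_add]; congr 1; omega] at hlN
      exact hlN
    rw [e1, e2, e3]
    generalize l ^ (2 * (I - 1)) = U at hlN' ⊢
    generalize l ^ (2 * (N + 1) - 2 * (I + 1)) = V at hlN' ⊢
    have hD : κC * (1 - l ^ 2) * (1 - U * V * l ^ 4) ≠ 0 :=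
      mul_ne_zero (mul_ne_zero hκ hl2) hlN'
    rw [show (z + 2 * κC) * ((1 - U * l ^ 2) * (1 - V * l ^ 2) *
          (l / (κC * (1 - l ^ 2) * (1 - U * V * l ^ 4)))) -
        κC * (l * (1 - U) * (1 - V * l ^ 2) *
          (l / (κC * (1 - l ^ 2) * (1 - U * V * l ^ 4)))) -
        κC * (l * (1 - U * l ^ 2) * (1 - V) *
          (l / (κC * (1 - l ^ 2) * (1 - U * V * l ^ 4)))) =
        ((z + 2 * κC) * ((1 - U * l ^ 2) * (1 - V * l ^ 2)) * l -
          κC * (l * (1 - U) * (1 - V * l ^ 2)) * l -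
          κC * (l * (1 - U * l ^ 2) * (1 - V)) * l) /
          (κC * (1 - l ^ 2) * (1 - U * V * l ^ 4)) by ring,
      div_eq_one_iff_eq hD]
    linear_combination ((1 - U * l ^ 2) * (1 - V * l ^ 2)) * hq
  · rw [if_neg (by omega)]
    have e1 : gfun N l κC I K =
        l ^ (I - 1 - K) * l * (1 - l ^ (2 * K)) *
          (1 - l ^ (2 * (N + 1) - 2 * (I + 1)) * l ^ 2) *
          (l / (κC * (1 - l ^ 2) * (1 - l ^ (2 * (N + 1))))) := by
      unfold gfun
      rw [max_eq_left h.le, min_eq_right h.le,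
        powsplit (I - K) (I - 1 - K) 1 (by omega), pow_one,
        powsplit (2 * (N + 1) - 2 * I) (2 * (N + 1) - 2 * (I + 1)) 2 (by omega)]
    have e2 : gfun N l κC (I - 1) K =
        l ^ (I - 1 - K) * (1 - l ^ (2 * K)) *
          (1 - l ^ (2 * (N + 1) - 2 * (I + 1)) * l ^ 4) *
          (l / (κC * (1 - l ^ 2) * (1 - l ^ (2 * (N + 1))))) := by
      unfold gfun
      rw [max_eq_left (by omega : K ≤ I - 1), min_eq_right (by omega : K ≤ I - 1),
        powsplit (2 * (N + 1) - 2 * (I - 1)) (2 * (N + 1) - 2 * (I + 1)) 4 (by omega)]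
    have e3 : gfun N l κC (I + 1) K =
        l ^ (I - 1 - K) * l ^ 2 * (1 - l ^ (2 * K)) *
          (1 - l ^ (2 * (N + 1) - 2 * (I + 1))) *
          (l / (κC * (1 - l ^ 2) * (1 - l ^ (2 * (N + 1))))) := by
      unfold gfun
      rw [max_eq_left (by omega : K ≤ I + 1), min_eq_right (by omega : K ≤ I + 1),
        powsplit (I + 1 - K) (I - 1 - K) 2 (by omega)]
    rw [e1, e2, e3]
    linear_combination (l ^ (I - 1 - K) * (1 - l ^ (2 * K)) *
      (1 - l ^ (2 * (N + 1) - 2 * (I + 1)) * l ^ 2) *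
      (l / (κC * (1 - l ^ 2) * (1 - l ^ (2 * (N + 1)))))) * hq

lemma amat_apply (N : ℕ) (τ : ℝ) (z κC : ℂ) (hκτ : (τ : ℂ) * ((N : ℂ) + 1) ^ 2 = κC)
    (i j : Fin N) :
    (z • (1 : Matrix (Fin N) (Fin N) ℂ) - (τ : ℂ) • (lmat N).map Complex.ofReal) i j
      = if (i : ℕ) = (j : ℕ) then z + 2 * κC
        else if (i : ℕ) + 1 = (j : ℕ) ∨ (j : ℕ) + 1 = (i : ℕ) then -κC else 0 := by
  simp only [Matrix.sub_apply, Matrix.smul_apply, Matrix.one_apply, Matrix.map_apply, lmat,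
    Matrix.of_apply, smul_eq_mul]
  by_cases h : (i : ℕ) = (j : ℕ)
  · rw [if_pos h, if_pos (Fin.ext h), if_pos h]
    push_cast
    rw [← hκτ]; ring
  · rw [if_neg h, if_neg (fun hh => h (congrArg Fin.val hh)), if_neg h]
    by_cases h2 : (i : ℕ) + 1 = (j : ℕ) ∨ (j : ℕ) + 1 = (i : ℕ)
    · rw [if_pos h2, if_pos h2]
      push_cast
      rw [← hκτ]; ring
    · rw [if_neg h2, if_neg h2]
      push_cast
      ring

lemma AG_eq_one (N : ℕ) (hN : 1 ≤ N) (τ : ℝ) (z κC l : ℂ)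
    (hκτ : (τ : ℂ) * ((N : ℂ) + 1) ^ 2 = κC)
    (hκ : κC ≠ 0) (hl2 : 1 - l ^ 2 ≠ 0) (hlN : 1 - l ^ (2 * (N + 1)) ≠ 0)
    (hq : z * l = κC * (1 - l) ^ 2) :
    (z • (1 : Matrix (Fin N) (Fin N) ℂ) - (τ : ℂ) • (lmat N).map Complex.ofReal) *
      (Matrix.of fun i k : Fin N => gfun N l κC ((i : ℕ) + 1) ((k : ℕ) + 1)) = 1 := by
  ext i k
  rw [Matrix.mul_apply]
  have hsplit : ∀ j : Fin N,
      (z • (1 : Matrix (Fin N) (Fin N) ℂ) - (τ : ℂ) • (lmat N).map Complex.ofReal) i j *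
        (Matrix.of fun i k : Fin N => gfun N l κC ((i : ℕ) + 1) ((k : ℕ) + 1)) j k
      = (if j = i then (z + 2 * κC) * gfun N l κC ((j : ℕ) + 1) ((k : ℕ) + 1) else 0) +
        ((if (j : ℕ) = (i : ℕ) + 1 then -κC * gfun N l κC ((j : ℕ) + 1) ((k : ℕ) + 1) else 0) +
         (if (j : ℕ) + 1 = (i : ℕ) then -κC * gfun N l κC ((j : ℕ) + 1) ((k : ℕ) + 1) else 0)) := by
    intro j
    rw [amat_apply N τ z κC hκτ i j, Matrix.of_apply]
    by_cases h1 : (i : ℕ) = (j : ℕ)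
    · rw [if_pos h1, if_pos (Fin.ext h1.symm), if_neg (by omega), if_neg (by omega)]
      ring
    · rw [if_neg h1, if_neg (fun hh => h1 (congrArg Fin.val hh).symm)]
      by_cases h2 : (i : ℕ) + 1 = (j : ℕ)
      · rw [if_pos (Or.inl h2), if_pos h2.symm, if_neg (by omega)]
        ring
      · by_cases h3 : (j : ℕ) + 1 = (i : ℕ)
        · rw [if_pos (Or.inr h3), if_neg (by omega), if_pos h3]
          ring
        · rw [if_neg (by tauto), if_neg (by omega), if_neg (by omega)]
          ring
  rw [Finset.sum_congr rfl (fun j _ => hsplit j), Finset.sum_add_distrib,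
    Finset.sum_add_distrib]
  have s1 : ∑ j : Fin N, (if j = i then (z + 2 * κC) * gfun N l κC ((j : ℕ) + 1) ((k : ℕ) + 1) else 0)
      = (z + 2 * κC) * gfun N l κC ((i : ℕ) + 1) ((k : ℕ) + 1) := by
    rw [Finset.sum_ite_eq' Finset.univ i
      (fun j => (z + 2 * κC) * gfun N l κC ((j : ℕ) + 1) ((k : ℕ) + 1))]
    simp
  have s2 : ∑ j : Fin N, (if (j : ℕ) = (i : ℕ) + 1 then -κC * gfun N l κC ((j : ℕ) + 1) ((k : ℕ) + 1) else 0)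
      = -κC * gfun N l κC ((i : ℕ) + 1 + 1) ((k : ℕ) + 1) := by
    by_cases hi : (i : ℕ) + 1 < N
    · rw [Finset.sum_eq_single (⟨(i : ℕ) + 1, hi⟩ : Fin N)]
      · rw [if_pos rfl]
      · intro b _ hb
        rw [if_neg (fun hh => hb (Fin.ext hh))]
      · intro hh; exact absurd (Finset.mem_univ _) hh
    · have hiN : (i : ℕ) + 1 = N := by omega
      rw [Finset.sum_eq_zero (fun j _ => if_neg (by omega)), hiN,
        gfun_left_top N l κC _ (by omega)]
      ring
  have s3 : ∑ j : Fin N, (if (j : ℕ) + 1 = (i : ℕ) then -κC * gfun N l κC ((j : ℕ) + 1) ((k : ℕ) + 1) else 0)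
      = -κC * gfun N l κC (i : ℕ) ((k : ℕ) + 1) := by
    by_cases hi : 0 < (i : ℕ)
    · have hlt : (i : ℕ) - 1 < N := Nat.lt_of_le_of_lt (Nat.sub_le _ _) i.isLt
      rw [Finset.sum_eq_single (⟨(i : ℕ) - 1, hlt⟩ : Fin N)]
      · rw [if_pos (show ((⟨(i : ℕ) - 1, hlt⟩ : Fin N) : ℕ) + 1 = (i : ℕ) by
          simp only [Fin.val_mk]; omega)]
        simp only [Fin.val_mk]
        rw [show (i : ℕ) - 1 + 1 = (i : ℕ) by omega]
      · intro b _ hb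
        rw [if_neg (fun hh => hb (Fin.ext (by simp only [Fin.val_mk]; omega)))]
      · intro hh; exact absurd (Finset.mem_univ _) hh
    · have hi0 : (i : ℕ) = 0 := by omega
      rw [Finset.sum_eq_zero (fun j _ => if_neg (by omega)), hi0]
      rw [gfun_left_zero]
      ring
  rw [s1, s2, s3]
  have := gfun_rec N l z κC hκ hl2 hlN hq ((i : ℕ) + 1) ((k : ℕ) + 1)
    (by omega) (by omega : (i : ℕ) + 1 ≤ N) (by omega) (by omega : (k : ℕ) + 1 ≤ N)
  rw [Matrix.one_apply]
  have hik : ((i : ℕ) + 1 = (k : ℕ) + 1) ↔ (i = k) := by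
    constructor
    · intro hh; exact Fin.ext (by omega)
    · intro hh; rw [hh]
  simp only [hik, Nat.add_sub_cancel] at this
  linear_combination this


lemma exists_root (κ : ℝ) (hκ : 0 < κ) (z : ℂ) (hz : z.im ≠ 0 ∨ 0 < z.re) :
    ∃ l : ℂ, ‖l‖ < 1 ∧ z * l = (κ : ℂ) * (1 - l) ^ 2 := by
  have hκ0 : (κ : ℂ) ≠ 0 := by simpa using ne_of_gt hκ
  obtain ⟨l1, l2, hmul, hq1, hq2⟩ :
      ∃ l1 l2 : ℂ, l1 * l2 = 1 ∧ z * l1 = (κ : ℂ) * (1 - l1) ^ 2 ∧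
        z * l2 = (κ : ℂ) * (1 - l2) ^ 2 := by
    obtain ⟨t, ht⟩ := IsAlgClosed.exists_pow_nat_eq
      ((z + 2 * κ) ^ 2 - 4 * (κ : ℂ) ^ 2) (n := 2) (by norm_num)
    refine ⟨(z + 2 * κ + t) / (2 * κ), (z + 2 * κ - t) / (2 * κ), ?_, ?_, ?_⟩
    · field_simp
      linear_combination -ht
    · field_simp
      linear_combination (-1) * ht
    · field_simp
      linear_combination (-1) * ht
  by_cases h1 : ‖l1‖ < 1
  · exact ⟨l1, h1, hq1⟩
  by_cases h2 : ‖l2‖ < 1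
  · exact ⟨l2, h2, hq2⟩
  exfalso
  have habs : ‖l1‖ * ‖l2‖ = 1 := by
    rw [← norm_mul, hmul, norm_one]
  push_neg at h1 h2
  have ha1 : ‖l1‖ = 1 := by nlinarith
  have h11 : l1 * (starRingEnd ℂ) l1 = 1 := by
    rw [Complex.mul_conj]
    norm_cast
    rw [Complex.normSq_eq_norm_sq, ha1]
    norm_num
  have hzr : z = (κ : ℂ) * (((2 * l1.re - 2 : ℝ)) : ℂ) := by
    have e1 : z = z * (l1 * (starRingEnd ℂ) l1) := by rw [h11]; ring
    have e2 : z * l1 * (starRingEnd ℂ) l1 = (κ : ℂ) * (1 - l1) ^ 2 * (starRingEnd ℂ) l1 := by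
      rw [hq1]
    have e4 : z = (κ : ℂ) * ((l1 + (starRingEnd ℂ) l1) - 2) := by
      rw [e1]
      calc z * (l1 * (starRingEnd ℂ) l1) = z * l1 * (starRingEnd ℂ) l1 := by ring
        _ = (κ : ℂ) * (1 - l1) ^ 2 * (starRingEnd ℂ) l1 := e2
        _ = (κ : ℂ) * ((l1 + (starRingEnd ℂ) l1) - 2) := by
            have : (κ : ℂ) * (1 - l1) ^ 2 * (starRingEnd ℂ) l1
                = (κ : ℂ) * ((l1 + (starRingEnd ℂ) l1) - 2)
                  + (κ : ℂ) * (l1 - 2) * ((l1 * (starRingEnd ℂ) l1) - 1) := by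
              ring
            rw [this, h11]
            ring
    rw [e4, Complex.add_conj]
    push_cast
    ring
  have him : z.im = 0 := by rw [hzr]; simp [Complex.mul_im]
  have hre : z.re ≤ 0 := by
    rw [hzr]
    have hle : l1.re ≤ 1 := by
      have := Complex.re_le_norm l1
      rw [ha1] at this; linarith
    simp only [Complex.mul_re, Complex.ofReal_re, Complex.ofReal_im]
    nlinarith
  rcases hz with h | h
  · exact h him
  · linarith

lemma gfun_abs_le (N : ℕ) (l κC : ℂ) (I K : ℕ) (hIN : I ≤ N) (hKN : K ≤ N) :
    ‖gfun N l κC I K‖ ≤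
      ((‖l‖ ^ (max I K - min I K)
          + ‖l‖ ^ (2 * (N + 1) - (max I K - min I K)))
        + (‖l‖ ^ (I + K) + ‖l‖ ^ (2 * (N + 1) - (I + K)))) *
      (‖l‖ /
        (‖κC‖ * ‖1 - l ^ 2‖ * ‖1 - l ^ (2 * (N + 1))‖)) := by
  set ρ := ‖l‖ with hρ
  have hρ0 : 0 ≤ ρ := norm_nonneg l
  unfold gfun
  rw [norm_mul, norm_mul, norm_mul, norm_div, norm_mul, norm_mul, norm_pow]
  have hb1 : ‖1 - l ^ (2 * min I K)‖ ≤ 1 + ρ ^ (2 * min I K) := by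
    calc ‖1 - l ^ (2 * min I K)‖
        ≤ ‖(1 : ℂ)‖ + ‖l ^ (2 * min I K)‖ := by
          simpa using norm_sub_le (1 : ℂ) (l ^ (2 * min I K))
      _ = 1 + ρ ^ (2 * min I K) := by rw [norm_one, norm_pow]
  have hb2 : ‖1 - l ^ (2 * (N + 1) - 2 * max I K)‖
      ≤ 1 + ρ ^ (2 * (N + 1) - 2 * max I K) := by
    calc ‖1 - l ^ (2 * (N + 1) - 2 * max I K)‖
        ≤ ‖(1 : ℂ)‖ + ‖l ^ (2 * (N + 1) - 2 * max I K)‖ := by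
          simpa using
            norm_sub_le (1 : ℂ) (l ^ (2 * (N + 1) - 2 * max I K))
      _ = 1 + ρ ^ (2 * (N + 1) - 2 * max I K) := by rw [norm_one, norm_pow]
  have hmain : ρ ^ (max I K - min I K) * ‖1 - l ^ (2 * min I K)‖ *
      ‖1 - l ^ (2 * (N + 1) - 2 * max I K)‖
      ≤ ((ρ ^ (max I K - min I K) + ρ ^ (2 * (N + 1) - (max I K - min I K)))
        + (ρ ^ (I + K) + ρ ^ (2 * (N + 1) - (I + K)))) := by
    have expand : ρ ^ (max I K - min I K) * (1 + ρ ^ (2 * min I K)) *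
        (1 + ρ ^ (2 * (N + 1) - 2 * max I K))
        = ((ρ ^ (max I K - min I K) + ρ ^ (2 * (N + 1) - (max I K - min I K)))
          + (ρ ^ (I + K) + ρ ^ (2 * (N + 1) - (I + K)))) := by
      have e1 : ρ ^ (max I K - min I K) * ρ ^ (2 * min I K) = ρ ^ (I + K) := by
        rw [← pow_add]; congr 1; omega
      have e2 : ρ ^ (max I K - min I K) * ρ ^ (2 * (N + 1) - 2 * max I K)
          = ρ ^ (2 * (N + 1) - (I + K)) := by
        rw [← pow_add]; congr 1; omega
      have e3 : ρ ^ (max I K - min I K) * (ρ ^ (2 * min I K) * ρ ^ (2 * (N + 1) - 2 * max I K))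
          = ρ ^ (2 * (N + 1) - (max I K - min I K)) := by
        rw [← pow_add, ← pow_add]; congr 1; omega
      calc ρ ^ (max I K - min I K) * (1 + ρ ^ (2 * min I K)) *
          (1 + ρ ^ (2 * (N + 1) - 2 * max I K))
          = ρ ^ (max I K - min I K)
            + ρ ^ (max I K - min I K) * ρ ^ (2 * min I K)
            + ρ ^ (max I K - min I K) * ρ ^ (2 * (N + 1) - 2 * max I K)
            + ρ ^ (max I K - min I K) * (ρ ^ (2 * min I K) * ρ ^ (2 * (N + 1) - 2 * max I K)) := by
            ring
        _ = _ := by rw [e1, e2, e3]; ring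
    rw [← expand]
    have h1 : 0 ≤ ρ ^ (max I K - min I K) := pow_nonneg hρ0 _
    calc ρ ^ (max I K - min I K) * ‖1 - l ^ (2 * min I K)‖ *
        ‖1 - l ^ (2 * (N + 1) - 2 * max I K)‖
        ≤ ρ ^ (max I K - min I K) * (1 + ρ ^ (2 * min I K)) *
          (1 + ρ ^ (2 * (N + 1) - 2 * max I K)) := by
          apply mul_le_mul
          · exact mul_le_mul_of_nonneg_left hb1 h1
          · exact hb2
          · exact norm_nonneg _
          · positivity
      _ = _ := rfl
  have hrest : 0 ≤ ρ / (‖κC‖ * ‖1 - l ^ 2‖ *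
      ‖1 - l ^ (2 * (N + 1))‖) := by positivity
  exact mul_le_mul_of_nonneg_right hmain hrest


lemma sumF_le (N i : ℕ) (hi : i < N) (ρ : ℝ) (h0 : 0 ≤ ρ) :
    ∑ k ∈ Finset.range N,
      ((ρ ^ (max (i + 1) (k + 1) - min (i + 1) (k + 1))
          + ρ ^ (2 * (N + 1) - (max (i + 1) (k + 1) - min (i + 1) (k + 1))))
        + (ρ ^ ((i + 1) + (k + 1)) + ρ ^ (2 * (N + 1) - ((i + 1) + (k + 1)))))
      ≤ ∑ e ∈ Finset.range (2 * (N + 1)), (ρ ^ e + ρ ^ (2 * (N + 1) - e)) := by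
  set F : ℕ → ℝ := fun e => ρ ^ e + ρ ^ (2 * (N + 1) - e) with hF
  have hF0 : ∀ e, 0 ≤ F e := fun e => by positivity
  -- rewrite LHS summand as F (dist) + F (i+k+2)
  have hL : ∑ k ∈ Finset.range N,
      ((ρ ^ (max (i + 1) (k + 1) - min (i + 1) (k + 1))
          + ρ ^ (2 * (N + 1) - (max (i + 1) (k + 1) - min (i + 1) (k + 1))))
        + (ρ ^ ((i + 1) + (k + 1)) + ρ ^ (2 * (N + 1) - ((i + 1) + (k + 1)))))
      = (∑ k ∈ Finset.range N, F (max (i + 1) (k + 1) - min (i + 1) (k + 1)))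
        + ∑ k ∈ Finset.range N, F ((i + 1) + (k + 1)) := by
    rw [← Finset.sum_add_distrib]
  rw [hL]
  -- the distance sum
  have hdist : ∑ k ∈ Finset.range N, F (max (i + 1) (k + 1) - min (i + 1) (k + 1))
      = (∑ k ∈ Finset.range i, F (k + 1)) + ∑ k ∈ Finset.range (N - i), F k := by
    have split : ∑ k ∈ Finset.range N, F (max (i + 1) (k + 1) - min (i + 1) (k + 1))
        = (∑ k ∈ Finset.Ico 0 i, F (max (i + 1) (k + 1) - min (i + 1) (k + 1)))
          + ∑ k ∈ Finset.Ico i N, F (max (i + 1) (k + 1) - min (i + 1) (k + 1)) := by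
      rw [Finset.range_eq_Ico, Finset.sum_Ico_consecutive _ (Nat.zero_le i) hi.le]
    rw [split]
    congr 1
    · rw [← Finset.range_eq_Ico]
      have step1 : ∀ k ∈ Finset.range i, F (max (i + 1) (k + 1) - min (i + 1) (k + 1))
          = F (i - k) := by
        intro k hk
        have hk' := Finset.mem_range.1 hk
        congr 1
        omega
      rw [Finset.sum_congr rfl step1]
      have reflect := Finset.sum_range_reflect (fun j => F (j + 1)) i
      rw [← reflect]
      apply Finset.sum_congr rfl
      intro k hk
      have hk' := Finset.mem_range.1 hk
      congr 1
      omega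
    · rw [Finset.sum_Ico_eq_sum_range]
      apply Finset.sum_congr rfl
      intro k _
      congr 1
      omega
  -- the second family
  have hsec : ∑ k ∈ Finset.range N, F ((i + 1) + (k + 1))
      = ∑ e ∈ Finset.Ico (i + 2) (i + 2 + N), F e := by
    rw [Finset.sum_Ico_eq_sum_range]
    rw [show i + 2 + N - (i + 2) = N by omega]
    apply Finset.sum_congr rfl
    intro k _
    congr 1
    omega
  -- middle flip
  have hmid : ∑ k ∈ Finset.range (N - i), F k
      = F 0 + ∑ e ∈ Finset.Ico (N + i + 3) (2 * (N + 1)), F e := by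
    have h1 : ∑ k ∈ Finset.range (N - i), F k
        = F 0 + ∑ k ∈ Finset.Ico 1 (N - i), F k := by
      have split : ∑ k ∈ Finset.Ico 0 (N - i), F k
          = (∑ k ∈ Finset.Ico 0 1, F k) + ∑ k ∈ Finset.Ico 1 (N - i), F k := by
        rw [Finset.sum_Ico_consecutive F (by omega : (0:ℕ) ≤ 1) (by omega : 1 ≤ N - i)]
      rw [Finset.range_eq_Ico, split,
        show Finset.Ico 0 1 = Finset.range 1 by rw [Finset.range_eq_Ico],
        Finset.sum_range_one]
    rw [h1]
    congr 1
    rw [Finset.sum_Ico_eq_sum_range, Finset.sum_Ico_eq_sum_range,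
      show N - i - 1 = 2 * (N + 1) - (N + i + 3) by omega]
    have reflect := Finset.sum_range_reflect (fun j => F (N + i + 3 + j)) (2 * (N + 1) - (N + i + 3))
    rw [← reflect]
    apply Finset.sum_congr rfl
    intro k hk
    have hk' := Finset.mem_range.1 hk
    show ρ ^ (1 + k) + ρ ^ (2 * (N + 1) - (1 + k))
      = ρ ^ (N + i + 3 + (2 * (N + 1) - (N + i + 3) - 1 - k))
        + ρ ^ (2 * (N + 1) - (N + i + 3 + (2 * (N + 1) - (N + i + 3) - 1 - k)))
    rw [show N + i + 3 + (2 * (N + 1) - (N + i + 3) - 1 - k) = 2 * (N + 1) - (1 + k) by omega,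
      show 2 * (N + 1) - (2 * (N + 1) - (1 + k)) = 1 + k by omega]
    ring
  -- decompose the RHS
  have p1 : ∑ e ∈ Finset.Ico 0 1, F e = F 0 := by
    rw [show Finset.Ico 0 1 = Finset.range 1 by rw [Finset.range_eq_Ico], Finset.sum_range_one]
  have p2 : ∑ e ∈ Finset.Ico 1 (i + 1), F e = ∑ k ∈ Finset.range i, F (k + 1) := by
    rw [Finset.sum_Ico_eq_sum_range, show i + 1 - 1 = i by omega]
    apply Finset.sum_congr rfl
    intro k _
    congr 1
    omega
  have chain : ∑ e ∈ Finset.range (2 * (N + 1)), F e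
      = (((((∑ e ∈ Finset.Ico 0 1, F e) + ∑ e ∈ Finset.Ico 1 (i + 1), F e)
        + ∑ e ∈ Finset.Ico (i + 1) (i + 2), F e)
        + ∑ e ∈ Finset.Ico (i + 2) (i + 2 + N), F e)
        + ∑ e ∈ Finset.Ico (i + 2 + N) (N + i + 3), F e)
        + ∑ e ∈ Finset.Ico (N + i + 3) (2 * (N + 1)), F e := by
    rw [Finset.range_eq_Ico,
      ← Finset.sum_Ico_consecutive F (by omega : (0:ℕ) ≤ N + i + 3) (by omega : N + i + 3 ≤ 2 * (N + 1)),
      ← Finset.sum_Ico_consecutive F (by omega : (0:ℕ) ≤ i + 2 + N) (by omega : i + 2 + N ≤ N + i + 3),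
      ← Finset.sum_Ico_consecutive F (by omega : (0:ℕ) ≤ i + 2) (by omega : i + 2 ≤ i + 2 + N),
      ← Finset.sum_Ico_consecutive F (by omega : (0:ℕ) ≤ i + 1) (by omega : i + 1 ≤ i + 2),
      ← Finset.sum_Ico_consecutive F (by omega : (0:ℕ) ≤ 1) (by omega : 1 ≤ i + 1)]
  rw [hdist, hsec, hmid]
  have n1 : 0 ≤ ∑ e ∈ Finset.Ico (i + 1) (i + 2), F e := Finset.sum_nonneg fun e _ => hF0 e
  have n2 : 0 ≤ ∑ e ∈ Finset.Ico (i + 2 + N) (N + i + 3), F e := Finset.sum_nonneg fun e _ => hF0 e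
  linarith [chain, p1, p2]

lemma sumF_le' (N i : ℕ) (hi : i < N) (ρ : ℝ) (h0 : 0 ≤ ρ) :
    ∑ k : Fin N,
      ((ρ ^ (max (i + 1) ((k : ℕ) + 1) - min (i + 1) ((k : ℕ) + 1))
          + ρ ^ (2 * (N + 1) - (max (i + 1) ((k : ℕ) + 1) - min (i + 1) ((k : ℕ) + 1))))
        + (ρ ^ ((i + 1) + ((k : ℕ) + 1)) + ρ ^ (2 * (N + 1) - ((i + 1) + ((k : ℕ) + 1)))))
      ≤ ∑ e ∈ Finset.range (2 * (N + 1)), (ρ ^ e + ρ ^ (2 * (N + 1) - e)) :=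
  le_trans
    (le_of_eq (Fin.sum_univ_eq_sum_range (fun k =>
      ((ρ ^ (max (i + 1) (k + 1) - min (i + 1) (k + 1))
          + ρ ^ (2 * (N + 1) - (max (i + 1) (k + 1) - min (i + 1) (k + 1))))
        + (ρ ^ ((i + 1) + (k + 1)) + ρ ^ (2 * (N + 1) - ((i + 1) + (k + 1)))))) N))
    (sumF_le N i hi ρ h0)

lemma sumF_eq (n : ℕ) (ρ : ℝ) :
    ∑ e ∈ Finset.range n, (ρ ^ e + ρ ^ (n - e)) = (1 + ρ) * ∑ e ∈ Finset.range n, ρ ^ e := by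
  rw [Finset.sum_add_distrib]
  have h2 : ∑ e ∈ Finset.range n, ρ ^ (n - e) = ∑ e ∈ Finset.range n, ρ ^ (e + 1) := by
    have reflect := Finset.sum_range_reflect (fun j => ρ ^ (j + 1)) n
    rw [← reflect]
    apply Finset.sum_congr rfl
    intro k hk
    have hk' := Finset.mem_range.1 hk
    congr 1
    omega
  rw [h2]
  have : ∑ e ∈ Finset.range n, ρ ^ (e + 1) = ρ * ∑ e ∈ Finset.range n, ρ ^ e := by
    rw [Finset.mul_sum]
    apply Finset.sum_congr rfl
    intro k _
    rw [pow_succ]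
    ring
  rw [this]
  ring


lemma scalar_final (κ : ℝ) (hκ : 0 < κ) (z l : ℂ) (hz0 : z ≠ 0) (hl0 : l ≠ 0)
    (hl1 : ‖l‖ < 1)
    (hq : z * l = (κ : ℂ) * (1 - l) ^ 2) (c : ℝ) (hc : 0 < c)
    (hc2 : c ^ 2 * (2 * ‖z‖) = ‖z‖ + z.re) :
    ‖l‖ * (1 + ‖l‖) /
        (κ * ‖1 - l ^ 2‖ * (1 - ‖l‖))
      ≤ (1 / c) / ‖z‖ := by
  set ρ := ‖l‖ with hρdef
  set s := ‖z‖ with hsdef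
  set x := l.re with hxdef
  set y := l.im with hydef
  have hs : 0 < s := norm_pos_iff.mpr hz0
  have hρpos : 0 < ρ := norm_pos_iff.mpr hl0
  have hρ1 : ρ < 1 := hl1
  have h1 : ρ ^ 2 = x ^ 2 + y ^ 2 := by
    rw [hρdef, Complex.sq_norm, Complex.normSq_apply]; ring
  have hW : (‖1 - l‖) ^ 2 = (1 - x) ^ 2 + y ^ 2 := by
    rw [Complex.sq_norm, Complex.normSq_apply, Complex.sub_re, Complex.sub_im,
      Complex.one_re, Complex.one_im]
    ring
  have hP : (‖1 + l‖) ^ 2 = (1 + x) ^ 2 + y ^ 2 := by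
    rw [Complex.sq_norm, Complex.normSq_apply, Complex.add_re, Complex.add_im,
      Complex.one_re, Complex.one_im]
    ring
  have habs2 : s * ρ = κ * (‖1 - l‖) ^ 2 := by
    rw [hsdef, hρdef, ← norm_mul, hq, norm_mul, norm_pow, Complex.norm_real, Real.norm_eq_abs,
      abs_of_pos hκ]
  have h2 : s * ρ = κ * ((1 - x) ^ 2 + y ^ 2) := by rw [habs2, hW]
  -- coordinate equations from hq
  have hre0 := congrArg Complex.re hq
  have him0 := congrArg Complex.im hq
  simp only [Complex.mul_re, Complex.mul_im, Complex.sub_re, Complex.sub_im, pow_two,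
    Complex.one_re, Complex.one_im, Complex.ofReal_re, Complex.ofReal_im,
    ← hxdef, ← hydef] at hre0 him0
  have hre : z.re * x - z.im * y = κ * ((1 - x) ^ 2 - y ^ 2) := by
    linear_combination hre0
  have him : z.re * y + z.im * x = κ * (-(2 * (1 - x) * y)) := by
    linear_combination him0
  have h3 : z.re * ρ ^ 2 = κ * (x - 2 * (x ^ 2 + y ^ 2) + x * (x ^ 2 + y ^ 2)) := by
    linear_combination x * hre + y * him + z.re * h1
  have hxle : x ≤ ρ := by rw [hρdef, hxdef]; exact Complex.re_le_norm l
  have E1 : c ^ 2 * (2 * s * ρ ^ 2) = κ * (ρ + x) * (1 - ρ) ^ 2 := by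
    linear_combination ρ ^ 2 * hc2 + ρ * h2 + h3 + (κ * (2 - x - ρ)) * h1
  have step : (ρ + x) * (1 + ρ) ^ 2 ≤ 2 * ρ * (1 + 2 * x + ρ ^ 2) := by
    nlinarith [mul_nonneg (sub_nonneg.2 hxle) (sq_nonneg (1 - ρ))]
  have hWpos : 0 ≤ (1 - x) ^ 2 + y ^ 2 := by positivity
  have hkey2 : c ^ 2 * ((1 - x) ^ 2 + y ^ 2) * (1 + ρ) ^ 2 * (2 * s * ρ ^ 2)
      ≤ ((1 + x) ^ 2 + y ^ 2) * (1 - ρ) ^ 2 * (2 * s * ρ ^ 2) := by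
    have c1 : c ^ 2 * ((1 - x) ^ 2 + y ^ 2) * (1 + ρ) ^ 2 * (2 * s * ρ ^ 2)
        = κ * ((1 - x) ^ 2 + y ^ 2) * (1 - ρ) ^ 2 * ((ρ + x) * (1 + ρ) ^ 2) := by
      linear_combination (((1 - x) ^ 2 + y ^ 2) * (1 + ρ) ^ 2) * E1
    have c2 : κ * ((1 - x) ^ 2 + y ^ 2) * (1 - ρ) ^ 2 * (2 * ρ * (1 + 2 * x + ρ ^ 2))
        = ((1 + x) ^ 2 + y ^ 2) * (1 - ρ) ^ 2 * (2 * s * ρ ^ 2) := by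
      linear_combination (-2 * ρ * (1 - ρ) ^ 2 * ((1 + x) ^ 2 + y ^ 2)) * h2
        + (2 * ρ * (1 - ρ) ^ 2 * κ * ((1 - x) ^ 2 + y ^ 2)) * h1
    rw [c1, ← c2]
    apply mul_le_mul_of_nonneg_left step
    positivity
  have hkey : (c * ‖1 - l‖ * (1 + ρ)) ^ 2
      ≤ (‖1 + l‖ * (1 - ρ)) ^ 2 := by
    have e1 : (c * ‖1 - l‖ * (1 + ρ)) ^ 2
        = c ^ 2 * ((1 - x) ^ 2 + y ^ 2) * (1 + ρ) ^ 2 := by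
      rw [mul_pow, mul_pow, hW]
    have e2 : (‖1 + l‖ * (1 - ρ)) ^ 2
        = ((1 + x) ^ 2 + y ^ 2) * (1 - ρ) ^ 2 := by
      rw [mul_pow, hP]
    rw [e1, e2]
    have hpos : 0 < 2 * s * ρ ^ 2 := by positivity
    exact le_of_mul_le_mul_right hkey2 hpos
  have hA : 0 ≤ c * ‖1 - l‖ * (1 + ρ) := by positivity
  have hB : 0 ≤ ‖1 + l‖ * (1 - ρ) := by
    have : (0:ℝ) ≤ 1 - ρ := by linarith
    positivity
  have hAB : c * ‖1 - l‖ * (1 + ρ) ≤ ‖1 + l‖ * (1 - ρ) := by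
    by_contra hcon
    push_neg at hcon
    have : (‖1 + l‖ * (1 - ρ)) ^ 2 < (c * ‖1 - l‖ * (1 + ρ)) ^ 2 :=
      pow_lt_pow_left₀ hcon hB (by norm_num)
    linarith [hkey]
  -- now conclude
  have hl2 : ‖1 - l ^ 2‖ = ‖1 - l‖ * ‖1 + l‖ := by
    rw [← norm_mul]
    congr 1
    ring
  have hfinal : c * s * (ρ * (1 + ρ)) ≤ κ * ‖1 - l ^ 2‖ * (1 - ρ) := by
    have e : c * s * (ρ * (1 + ρ)) = κ * ‖1 - l‖ * (c * ‖1 - l‖ * (1 + ρ)) := by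
      linear_combination (c * (1 + ρ)) * habs2
    rw [e, hl2]
    calc κ * ‖1 - l‖ * (c * ‖1 - l‖ * (1 + ρ))
        ≤ κ * ‖1 - l‖ * (‖1 + l‖ * (1 - ρ)) := by
          apply mul_le_mul_of_nonneg_left hAB
          positivity
      _ = κ * (‖1 - l‖ * ‖1 + l‖) * (1 - ρ) := by ring
  have hDpos : 0 < κ * ‖1 - l ^ 2‖ * (1 - ρ) := by
    have hll : 0 < ‖1 - l‖ := by
      apply norm_pos_iff.mpr
      intro hh
      have hll1 : l = 1 := by linear_combination -hh
      have : ρ = 1 := by rw [hρdef, hll1, norm_one]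
      linarith
    have hll2 : 0 < ‖1 + l‖ := by
      apply norm_pos_iff.mpr
      intro hh
      have hll1 : l = -1 := by linear_combination hh
      have : ρ = 1 := by rw [hρdef, hll1]; simp
      linarith
    rw [hl2]
    have : (0:ℝ) < 1 - ρ := by linarith
    positivity
  rw [div_le_div_iff₀ hDpos hs]
  have harr : 1 / c * (κ * ‖1 - l ^ 2‖ * (1 - ρ))
      = (κ * ‖1 - l ^ 2‖ * (1 - ρ)) / c := by ring
  rw [harr, le_div_iff₀ hc]
  calc ρ * (1 + ρ) * s * c = c * s * (ρ * (1 + ρ)) := by ring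
    _ ≤ κ * ‖1 - l ^ 2‖ * (1 - ρ) := hfinal

theorem stmt1 (N : ℕ) (hN : 1 ≤ N) (τ : ℝ) (hτ : 0 < τ) (z : ℂ) (hz0 : z ≠ 0)
    (θ : ℝ) (hθ : |θ| < Real.pi)
    (hz : z = ((‖z‖ : ℝ) : ℂ) * Complex.exp (θ * Complex.I)) :
    IsUnit (z • (1 : Matrix (Fin N) (Fin N) ℂ) - (τ : ℂ) • (lmat N).map Complex.ofReal) ∧
      matNormC (z • (1 : Matrix (Fin N) (Fin N) ℂ) - (τ : ℂ) • (lmat N).map Complex.ofReal)⁻¹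
        ≤ (1 / Real.cos (θ / 2)) / ‖z‖ := by
  have hθ' := abs_lt.mp hθ
  set s := ‖z‖ with hsdef
  have hs : 0 < s := norm_pos_iff.mpr hz0
  -- trigonometry
  set c := Real.cos (θ / 2) with hcdef
  have hc : 0 < c := Real.cos_pos_of_mem_Ioo ⟨by linarith [Real.pi_pos], by linarith⟩
  have hre : z.re = s * Real.cos θ := by
    rw [hz]
    simp [Complex.mul_re, Complex.exp_ofReal_mul_I_re]
  have him : z.im = s * Real.sin θ := by
    rw [hz]
    simp [Complex.mul_im, Complex.exp_ofReal_mul_I_im]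
  have hc2 : c ^ 2 * (2 * s) = s + z.re := by
    rw [hcdef, Real.cos_sq, hre]
    rw [show 2 * (θ / 2) = θ by ring]
    ring
  -- z is not a nonpositive real
  have hznn : z.im ≠ 0 ∨ 0 < z.re := by
    by_cases hsin : Real.sin θ = 0
    · right
      have hθ0 : θ = 0 := by
        rcases (Real.sin_eq_zero_iff_of_lt_of_lt (by linarith) (by linarith)).1 hsin with h
        exact h
      rw [hre, hθ0]
      simpa using hs
    · left
      rw [him]
      exact mul_ne_zero (ne_of_gt hs) hsin
  -- set up κ and the root l
  set κ : ℝ := τ * ((N : ℝ) + 1) ^ 2 with hκdef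
  have hκpos : 0 < κ := by positivity
  have hκτ : (τ : ℂ) * ((N : ℂ) + 1) ^ 2 = ((κ : ℝ) : ℂ) := by
    rw [hκdef]
    push_cast
    ring
  have hκC0 : ((κ : ℝ) : ℂ) ≠ 0 := by
    simpa using ne_of_gt hκpos
  obtain ⟨l, hl1, hq⟩ := exists_root κ hκpos z hznn
  set ρ := ‖l‖ with hρdef
  have hρ0 : 0 ≤ ρ := norm_nonneg l
  have hl0 : l ≠ 0 := by
    intro h
    rw [h] at hq
    have : ((κ : ℝ) : ℂ) = 0 := by linear_combination -hq
    exact hκC0 this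
  have hρpos : 0 < ρ := norm_pos_iff.mpr hl0
  have hl2ne : 1 - l ^ 2 ≠ 0 := by
    intro h
    have h2 : l ^ 2 = 1 := by linear_combination -h
    have : ρ ^ 2 = 1 := by
      rw [hρdef, ← norm_pow, h2, norm_one]
    nlinarith
  have hlNne : 1 - l ^ (2 * (N + 1)) ≠ 0 := by
    intro h
    have h2 : l ^ (2 * (N + 1)) = 1 := by linear_combination -h
    have : ρ ^ (2 * (N + 1)) = 1 := by
      rw [hρdef, ← norm_pow, h2, norm_one]
    have hlt : ρ ^ (2 * (N + 1)) < 1 := pow_lt_one₀ hρ0 hl1 (by omega)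
    linarith
  -- inverse matrix
  have hAG := AG_eq_one N hN τ z ((κ : ℝ) : ℂ) l hκτ hκC0 hl2ne hlNne hq
  have hGA := mul_eq_one_comm.mp hAG
  constructor
  · exact ⟨⟨_, _, hAG, hGA⟩, rfl⟩
  have hinv := Matrix.inv_eq_right_inv hAG
  rw [hinv]
  -- bound the norm of the explicit inverse
  have hNE : Nonempty (Fin N) := ⟨⟨0, by omega⟩⟩
  rw [matNormC]
  apply ciSup_le
  intro i
  set T : ℝ := ∑ e ∈ Finset.range (2 * (N + 1)), ρ ^ e with hTdef
  have hT1 : (1 : ℝ) ≤ T := by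
    rw [hTdef]
    have := Finset.single_le_sum (f := fun e => ρ ^ e)
      (fun e _ => by positivity) (Finset.mem_range.2 (show 0 < 2 * (N + 1) by omega))
    simpa using this
  have hTpos : 0 < T := by linarith
  have hDen1pos : 0 < ‖1 - l ^ 2‖ := norm_pos_iff.mpr hl2ne
  have hgeo : (1 - ρ) * T = 1 - ρ ^ (2 * (N + 1)) := by
    have := geom_sum_mul ρ (2 * (N + 1))
    rw [hTdef]
    linear_combination -this
  have hlow : (1 - ρ) * T ≤ ‖1 - l ^ (2 * (N + 1))‖ := by
    rw [hgeo]
    have := norm_sub_norm_le (1 : ℂ) (l ^ (2 * (N + 1)))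
    simpa [norm_pow] using this
  set C : ℝ := ‖((κ : ℝ) : ℂ)‖ * ‖1 - l ^ 2‖ *
    ‖1 - l ^ (2 * (N + 1))‖ with hCdef
  have hκabs : ‖((κ : ℝ) : ℂ)‖ = κ := by
    rw [Complex.norm_real, Real.norm_eq_abs, abs_of_pos hκpos]
  have hCpos : 0 < C := by
    rw [hCdef, hκabs]
    have : 0 < ‖1 - l ^ (2 * (N + 1))‖ := norm_pos_iff.mpr hlNne
    positivity
  -- row sum estimate
  calc ∑ k : Fin N, ‖(Matrix.of fun i k : Fin N =>
        gfun N l ((κ : ℝ) : ℂ) ((i : ℕ) + 1) ((k : ℕ) + 1)) i k‖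
      = ∑ k : Fin N, ‖gfun N l ((κ : ℝ) : ℂ) ((i : ℕ) + 1) ((k : ℕ) + 1)‖ := by
        simp only [Matrix.of_apply]
    _ ≤ ∑ k : Fin N,
        ((ρ ^ (max ((i : ℕ) + 1) ((k : ℕ) + 1) - min ((i : ℕ) + 1) ((k : ℕ) + 1))
            + ρ ^ (2 * (N + 1) - (max ((i : ℕ) + 1) ((k : ℕ) + 1) - min ((i : ℕ) + 1) ((k : ℕ) + 1))))
          + (ρ ^ (((i : ℕ) + 1) + ((k : ℕ) + 1)) + ρ ^ (2 * (N + 1) - (((i : ℕ) + 1) + ((k : ℕ) + 1)))))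
          * (ρ / C) := by
        apply Finset.sum_le_sum
        intro k _
        exact gfun_abs_le N l ((κ : ℝ) : ℂ) ((i : ℕ) + 1) ((k : ℕ) + 1)
          (by omega) (by omega)
    _ = (∑ k : Fin N,
        ((ρ ^ (max ((i : ℕ) + 1) ((k : ℕ) + 1) - min ((i : ℕ) + 1) ((k : ℕ) + 1))
            + ρ ^ (2 * (N + 1) - (max ((i : ℕ) + 1) ((k : ℕ) + 1) - min ((i : ℕ) + 1) ((k : ℕ) + 1))))
          + (ρ ^ (((i : ℕ) + 1) + ((k : ℕ) + 1)) + ρ ^ (2 * (N + 1) - (((i : ℕ) + 1) + ((k : ℕ) + 1))))))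
          * (ρ / C) := by
        rw [Finset.sum_mul]
    _ ≤ (∑ e ∈ Finset.range (2 * (N + 1)), (ρ ^ e + ρ ^ (2 * (N + 1) - e))) * (ρ / C) := by
        apply mul_le_mul_of_nonneg_right _ (by positivity)
        exact sumF_le' N (i : ℕ) i.isLt ρ hρ0
    _ = ((1 + ρ) * T) * (ρ / C) := by rw [sumF_eq, hTdef]
    _ = (ρ * (1 + ρ) * T) / C := by ring
    _ ≤ (ρ * (1 + ρ) * T) / (κ * ‖1 - l ^ 2‖ * ((1 - ρ) * T)) := by
        apply div_le_div_of_nonneg_left (mul_nonneg (mul_nonneg hρ0 (by linarith)) hTpos.le) _ _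
        · have h1ρ : 0 < 1 - ρ := by linarith
          exact mul_pos (mul_pos hκpos hDen1pos) (mul_pos h1ρ hTpos)
        · rw [hCdef, hκabs]
          calc κ * ‖1 - l ^ 2‖ * ((1 - ρ) * T)
              ≤ κ * ‖1 - l ^ 2‖ * ‖1 - l ^ (2 * (N + 1))‖ := by
                apply mul_le_mul_of_nonneg_left hlow
                positivity
            _ = _ := rfl
    _ = ρ * (1 + ρ) / (κ * ‖1 - l ^ 2‖ * (1 - ρ)) := by
        rw [div_eq_div_iff]
        · ring
        · have h1ρ : 0 < 1 - ρ := by linarith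
          exact (mul_pos (mul_pos hκpos hDen1pos) (mul_pos h1ρ hTpos)).ne'
        · have h1ρ : 0 < 1 - ρ := by linarith
          exact (mul_pos (mul_pos hκpos hDen1pos) h1ρ).ne'
    _ ≤ (1 / c) / ‖z‖ := by
        exact scalar_final κ hκpos z l hz0 hl0 hl1 hq c hc hc2
end

section
/- Let m ≥ 1, 0 < α ≤ π/4, and let R(z₁,…,z_m) = P/Q be a rational function of m complex variables such that Q has no zeros in W(α)^m and |R(z₁,…,z_m)| ≤ 1 whenever all z_j ∈ W(α). Then for every n ≥ 0 and all nonzero z₁,…,z_m ∈ W(α), one has z₁ + ⋯ + z_m ≠ 0 and |R(z₁,…,z_m)ⁿ / (z₁ + ⋯ + z_m)| ≤ m^{−1/2} · ∏_{j=1}^m |z_j|^{−1/m}. -/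
open scoped BigOperators

/-- The sector `W(α) = {z ∈ ℂ : |arg(−z)| ≤ α} ∪ {0}`. -/
def Wsector (α : ℝ) : Set ℂ := {z | z = 0 ∨ |Complex.arg (-z)| ≤ α}

lemma sector_im_le_re {w : ℂ} (hw : w ≠ 0) (h : |Complex.arg w| ≤ Real.pi / 4) :
    |w.im| ≤ w.re := by
  have habs : (0:ℝ) < ‖w‖ := norm_pos_iff.mpr hw
  set t := Complex.arg w with htdef
  have hpi := Real.pi_pos
  have hre : w.re = ‖w‖ * Real.cos t := by
    have := Complex.cos_arg hw
    rw [← htdef] at this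
    rw [this, mul_div_assoc', mul_comm, mul_div_assoc, div_self habs.ne', mul_one]
  have him : w.im = ‖w‖ * Real.sin t := by
    have := Complex.sin_arg w
    rw [← htdef] at this
    rw [this, mul_div_assoc', mul_comm, mul_div_assoc, div_self habs.ne', mul_one]
  have hsabs : |Real.sin t| = Real.sin |t| := by
    rcases abs_cases t with ⟨h1, h2⟩ | ⟨h1, h2⟩
    · rw [h1, abs_of_nonneg (Real.sin_nonneg_of_nonneg_of_le_pi h2 (by
        have : t ≤ |t| := le_abs_self t
        linarith))]
    · rw [h1, Real.sin_neg, abs_of_nonpos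
        (Real.sin_nonpos_of_nonpos_of_neg_pi_le h2.le (by
          have h3 : -|t| ≤ t := neg_abs_le t
          linarith))]
  have hs1 : Real.sin |t| ≤ Real.sin (Real.pi / 4) :=
    Real.sin_le_sin_of_le_of_le_pi_div_two (by linarith [abs_nonneg t])
      (by linarith) h
  have hc1 : Real.cos (Real.pi / 4) ≤ Real.cos t := by
    have := Real.cos_le_cos_of_nonneg_of_le_pi (abs_nonneg t) (by linarith) h
    rwa [Real.cos_abs] at this
  have hkey : |Real.sin t| ≤ Real.cos t := by
    rw [hsabs]
    calc Real.sin |t| ≤ Real.sin (Real.pi/4) := hs1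
      _ = Real.cos (Real.pi/4) := by rw [Real.sin_pi_div_four, Real.cos_pi_div_four]
      _ ≤ Real.cos t := hc1
  rw [hre, him, abs_mul, abs_of_pos habs]
  exact mul_le_mul_of_nonneg_left hkey habs.le

lemma re_mul_conj_nonneg {a b : ℂ} (ha : |a.im| ≤ a.re) (hb : |b.im| ≤ b.re) :
    0 ≤ (a * (starRingEnd ℂ) b).re := by
  have : (a * (starRingEnd ℂ) b).re = a.re * b.re + a.im * b.im := by
    simp [Complex.mul_re]
  rw [this]
  have h1 : |a.im| * |b.im| ≤ a.re * b.re :=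
    mul_le_mul ha hb (abs_nonneg _) ((abs_nonneg _).trans ha)
  have h2 : -(a.im * b.im) ≤ |a.im * b.im| := neg_le_abs _
  rw [abs_mul] at h2
  linarith

theorem stmt7 (m : ℕ) (hm : 1 ≤ m) (α : ℝ) (hα0 : 0 < α) (hα : α ≤ Real.pi / 4)
    (P Q : MvPolynomial (Fin m) ℂ)
    (hQ : ∀ z : Fin m → ℂ, (∀ j, z j ∈ Wsector α) → MvPolynomial.eval z Q ≠ 0)
    (hR : ∀ z : Fin m → ℂ, (∀ j, z j ∈ Wsector α) →
      ‖MvPolynomial.eval z P / MvPolynomial.eval z Q‖ ≤ 1)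
    (n : ℕ) (z : Fin m → ℂ) (hz : ∀ j, z j ∈ Wsector α) (hz0 : ∀ j, z j ≠ 0) :
    (∑ j, z j) ≠ 0 ∧
    ‖(MvPolynomial.eval z P / MvPolynomial.eval z Q) ^ n / ∑ j, z j‖ ≤
      (Real.sqrt m)⁻¹ * ∏ j, ‖z j‖ ^ (-(1 : ℝ) / m) := by
  have hmR : (0:ℝ) < m := by exact_mod_cast hm
  set r : Fin m → ℝ := fun j => ‖z j‖ with hr
  have hrpos : ∀ j, 0 < r j := fun j => norm_pos_iff.mpr (hz0 j)
  have hsec : ∀ j, |(-(z j)).im| ≤ (-(z j)).re := by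
    intro j
    rcases hz j with h | h
    · exact absurd h (hz0 j)
    · exact sector_im_le_re (neg_ne_zero.mpr (hz0 j)) (h.trans hα)
  have hterm : ∀ j k, 0 ≤ (z j * (starRingEnd ℂ) (z k)).re := by
    intro j k
    have := re_mul_conj_nonneg (hsec j) (hsec k)
    have e : -(z j) * (starRingEnd ℂ) (-(z k)) = z j * (starRingEnd ℂ) (z k) := by
      simp only [map_neg]; ring
    rwa [e] at this
  set S := ∑ j, z j with hS
  have hnormSq : Complex.normSq S = ∑ j, ∑ k, (z j * (starRingEnd ℂ) (z k)).re := by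
    have h0 : (S * (starRingEnd ℂ) S).re = Complex.normSq S := by
      rw [Complex.mul_conj]; simp
    rw [← h0, hS, map_sum, Finset.sum_mul_sum, Complex.re_sum]
    simp [Complex.re_sum]
  have hlow : ∑ j, r j ^ 2 ≤ Complex.normSq S := by
    rw [hnormSq]
    apply Finset.sum_le_sum
    intro j _
    have h1 : r j ^ 2 = (z j * (starRingEnd ℂ) (z j)).re := by
      rw [Complex.mul_conj, Complex.ofReal_re]
      exact Complex.sq_norm (z j)
    rw [h1]
    exact Finset.single_le_sum (fun k _ => hterm j k) (Finset.mem_univ j)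
  have hamgm : (m:ℝ) * ∏ j, (r j ^ 2) ^ ((1:ℝ)/m) ≤ ∑ j, r j ^ 2 := by
    have h := Real.geom_mean_le_arith_mean_weighted Finset.univ (fun _ => (1:ℝ)/m)
      (fun j => r j ^ 2) (fun i _ => by positivity)
      (by simp [Finset.sum_const, Finset.card_univ]; field_simp)
      (fun i _ => by positivity)
    have h2 : ∑ j : Fin m, (1:ℝ)/m * (r j ^ 2) = (∑ j, r j ^ 2) / m := by
      rw [Finset.sum_div]; exact Finset.sum_congr rfl fun j _ => by ring
    rw [h2] at h
    rw [mul_comm, ← le_div_iff₀ hmR]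
    exact h
  set B : ℝ := Real.sqrt m * ∏ j, r j ^ ((1:ℝ)/m) with hB
  have hBpos : 0 < B := by
    apply mul_pos (Real.sqrt_pos.mpr hmR)
    exact Finset.prod_pos fun j _ => Real.rpow_pos_of_pos (hrpos j) _
  have hBsq : B ^ 2 = (m:ℝ) * ∏ j, (r j ^ 2) ^ ((1:ℝ)/m) := by
    rw [hB, mul_pow, Real.sq_sqrt hmR.le, ← Finset.prod_pow]
    congr 1
    apply Finset.prod_congr rfl
    intro j _
    rw [← Real.rpow_natCast (r j ^ ((1:ℝ)/m)) 2, ← Real.rpow_natCast (r j) 2,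
      ← Real.rpow_mul (hrpos j).le, ← Real.rpow_mul (hrpos j).le]
    norm_num
    ring_nf
  have hBS : B ≤ ‖S‖ := by
    have h1 : B ^ 2 ≤ (‖S‖) ^ 2 := by
      rw [Complex.sq_norm]
      calc B ^ 2 = (m:ℝ) * ∏ j, (r j ^ 2) ^ ((1:ℝ)/m) := hBsq
        _ ≤ ∑ j, r j ^ 2 := hamgm
        _ ≤ Complex.normSq S := hlow
    nlinarith [norm_nonneg S, hBpos]
  have hS0 : S ≠ 0 := by
    intro h
    rw [h] at hBS
    simp at hBS
    linarith
  refine ⟨hS0, ?_⟩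
  have hRle : ‖MvPolynomial.eval z P / MvPolynomial.eval z Q‖ ≤ 1 := hR z hz
  rw [norm_div, norm_pow]
  have hSpos : (0:ℝ) < ‖S‖ := norm_pos_iff.mpr hS0
  have hnum : ‖MvPolynomial.eval z P / MvPolynomial.eval z Q‖ ^ n ≤ 1 :=
    pow_le_one₀ (by positivity) hRle
  calc ‖MvPolynomial.eval z P / MvPolynomial.eval z Q‖ ^ n / ‖S‖
      ≤ 1 / ‖S‖ := (div_le_div_iff_of_pos_right hSpos).mpr hnum
    _ ≤ 1 / B := one_div_le_one_div_of_le hBpos hBS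
    _ = (Real.sqrt m)⁻¹ * ∏ j, r j ^ (-(1:ℝ)/m) := by
        rw [hB, one_div, mul_inv, ← Finset.prod_inv_distrib]
        congr 1
        apply Finset.prod_congr rfl
        intro j _
        rw [show (-(1:ℝ)/m) = -((1:ℝ)/m) by ring, Real.rpow_neg (hrpos j).le]
end

section
/- Let N ≥ 1, Δx = 1/(N+1), L_N = (1/Δx²)·tridiag(1,−2,1), let 0 < α ≤ π/4, τ > 0, and 0 < β̂ ≤ β_j. For every z = −4β̂τ·e^{iθ} with |θ| ≤ α, the matrix zI − τβ_j L_N is invertible and ‖(zI − τβ_j L_N)⁻¹‖_∞ ≤ 1/(4β̂τ). -/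
open scoped BigOperators

/-- Extension of a vector on `Fin N` to `ℕ` with zero (Dirichlet) boundary values. -/
def ext0 {N : ℕ} (x : Fin N → ℂ) : ℕ → ℂ :=
  fun k => if h : 1 ≤ k ∧ k ≤ N then x ⟨k - 1, by omega⟩ else 0

/-- A discretely convex sequence which is nonpositive at both endpoints is
nonpositive everywhere in between. -/
lemma aux_seq (n : ℕ) (f : ℕ → ℝ) (h0 : f 0 ≤ 0) (hn : f (n + 1) ≤ 0)
    (hconv : ∀ i, i < n → 2 * f (i + 1) ≤ f i + f (i + 2)) :
    ∀ i, i ≤ n + 1 → f i ≤ 0 := by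
  by_contra hcon
  push_neg at hcon
  obtain ⟨k, hk, hfk⟩ := hcon
  have hk1 : 1 ≤ k := by
    rcases Nat.eq_zero_or_pos k with h | h
    · subst h; linarith
    · omega
  have hkn : k ≤ n := by
    have : k ≠ n + 1 := by intro h; rw [h] at hfk; linarith
    omega
  set d : ℕ → ℝ := fun i => f (i + 1) - f i with hd
  have hstep : ∀ i, i < n → d i ≤ d (i + 1) := by
    intro i hi
    have := hconv i hi
    simp only [hd]
    linarith
  have hmono : ∀ j, j ≤ n → ∀ i, i ≤ j → d i ≤ d j := by
    intro j
    induction j with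
    | zero => intro _ i hi; exact le_of_eq (by rw [show i = 0 by omega])
    | succ m ih =>
      intro hjn i hi
      rcases Nat.lt_or_ge i (m + 1) with h | h
      · have h1 : d i ≤ d m := ih (by omega) i (by omega)
        have h2 : d m ≤ d (m + 1) := hstep m (by omega)
        linarith
      · have : i = m + 1 := by omega
        simp [this]
  have hsum : ∑ i ∈ Finset.range k, d i = f k - f 0 := Finset.sum_range_sub f k
  have hex : ∃ j ∈ Finset.range k, 0 < d j := by
    by_contra hno
    push_neg at hno
    have : ∑ i ∈ Finset.range k, d i ≤ 0 := Finset.sum_nonpos hno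
    linarith
  obtain ⟨j, hjmem, hdj⟩ := hex
  have hjk : j < k := Finset.mem_range.mp hjmem
  have hsum2 : ∑ i ∈ Finset.Ico k (n + 1), d i = f (n + 1) - f k := by
    rw [Finset.sum_Ico_eq_sub _ (by omega : k ≤ n + 1), Finset.sum_range_sub f,
      Finset.sum_range_sub f]
    ring
  have hpos : 0 ≤ ∑ i ∈ Finset.Ico k (n + 1), d i := by
    apply Finset.sum_nonneg
    intro i hi
    have hi' := Finset.mem_Ico.mp hi
    have := hmono i (by omega) j (by omega)
    linarith
  linarith

/-- Core analytic bound: maximum principle with quadratic barrier for the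
complex tridiagonal system. -/
lemma main_bound (n : ℕ) (hn : 1 ≤ n) (r c b0 : ℝ) (hr : 0 < r)
    (hc : r * ((n : ℝ) + 1) ^ 2 / 4 ≤ c) (hb0 : 0 ≤ b0)
    (z : ℂ) (hz : -r ≤ z.re) (X B : ℕ → ℂ) (hX0 : X 0 = 0) (hXn : X (n + 1) = 0)
    (hB : ∀ i, ‖B i‖ ≤ b0)
    (heq : ∀ i, 1 ≤ i → i ≤ n →
      (z + 2 * (c : ℂ)) * X i - (c : ℂ) * X (i - 1) - (c : ℂ) * X (i + 1) = B i) :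
    ∀ i, i ≤ n + 1 → ‖X i‖ ≤ b0 / r := by
  have hc0 : 0 < c := by
    have : (0 : ℝ) < r * ((n : ℝ) + 1) ^ 2 / 4 := by positivity
    linarith
  set m : ℕ → ℝ := fun i => ‖X i‖ with hm
  have hmnn : ∀ i, 0 ≤ m i := fun i => norm_nonneg _
  have hne : (Finset.Icc 1 n).Nonempty := ⟨1, Finset.mem_Icc.mpr ⟨le_refl 1, hn⟩⟩
  obtain ⟨k, hkmem, hkmax⟩ := Finset.exists_max_image (Finset.Icc 1 n) m hne
  have hkmem' := Finset.mem_Icc.mp hkmem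
  set M : ℝ := m k with hM
  have hM0 : 0 ≤ M := hmnn k
  -- key pointwise inequality
  have key : ∀ i, 1 ≤ i → i ≤ n →
      2 * c * m i ≤ b0 + r * m i + c * m (i - 1) + c * m (i + 1) := by
    intro i h1 h2
    have he := heq i h1 h2
    have h3 : (z + 2 * (c : ℂ)) * X i = B i + (c : ℂ) * X (i - 1) + (c : ℂ) * X (i + 1) := by
      linear_combination he
    have habs : ‖z + 2 * (c : ℂ)‖ * m i ≤ b0 + c * m (i - 1) + c * m (i + 1) := by
      rw [hm]
      simp only
      rw [← norm_mul, h3]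
      calc ‖B i + (c : ℂ) * X (i - 1) + (c : ℂ) * X (i + 1)‖
          ≤ ‖B i + (c : ℂ) * X (i - 1)‖ + ‖(c : ℂ) * X (i + 1)‖ :=
            norm_add_le _ _
        _ ≤ ‖B i‖ + ‖(c : ℂ) * X (i - 1)‖
              + ‖(c : ℂ) * X (i + 1)‖ := by
            have := norm_add_le (B i) ((c : ℂ) * X (i - 1))
            linarith
        _ ≤ b0 + c * m (i - 1) + c * m (i + 1) := by
            have h4 := hB i
            rw [norm_mul, norm_mul, Complex.norm_of_nonneg hc0.le]
            simp only [hm]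
            linarith
    have hlb : 2 * c - r ≤ ‖z + 2 * (c : ℂ)‖ := by
      have h5 := Complex.re_le_norm (z + 2 * (c : ℂ))
      have hre : (z + 2 * (c : ℂ)).re = z.re + 2 * c := by simp
      rw [hre] at h5
      linarith
    have h6 : (2 * c - r) * m i ≤ ‖z + 2 * (c : ℂ)‖ * m i :=
      mul_le_mul_of_nonneg_right hlb (hmnn i)
    nlinarith [hmnn i]
  set K : ℝ := b0 + r * M with hK
  have hK0 : 0 ≤ K := by
    have : 0 ≤ r * M := mul_nonneg hr.le hM0
    linarith
  set v : ℕ → ℝ := fun i => K / (2 * c) * (i : ℝ) * ((n : ℝ) + 1 - (i : ℝ)) with hv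
  have hfle : ∀ i, i ≤ n + 1 → m i - v i ≤ 0 := by
    apply aux_seq
    · simp [hm, hv, hX0]
    · simp only [hm, hv, hXn, norm_zero]
      push_cast
      ring_nf
      simp
    · intro i hi
      have hk2 := key (i + 1) (by omega) (by omega)
      have hmM : m (i + 1) ≤ M := hkmax (i + 1) (Finset.mem_Icc.mpr ⟨by omega, by omega⟩)
      have hvv : 2 * v (i + 1) - v i - v (i + 2) = K / c := by
        simp only [hv]
        push_cast
        field_simp
        ring
      have h7 : 2 * c * m (i + 1) ≤ K + c * m i + c * m (i + 2) := by
        have : r * m (i + 1) ≤ r * M := mul_le_mul_of_nonneg_left hmM hr.le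
        simp only [Nat.add_sub_cancel] at hk2
        simp only [hK]
        linarith
      have h8 : 2 * m (i + 1) - m i - m (i + 2) ≤ K / c := by
        rw [le_div_iff₀ hc0]
        nlinarith
      linarith
  have hMv : M ≤ v k := by
    have := hfle k (by omega)
    linarith
  have hvk : v k ≤ K * ((n : ℝ) + 1) ^ 2 / (8 * c) := by
    simp only [hv]
    have h1 : (k : ℝ) * ((n : ℝ) + 1 - (k : ℝ)) ≤ ((n : ℝ) + 1) ^ 2 / 4 := by
      nlinarith [sq_nonneg ((n : ℝ) + 1 - 2 * (k : ℝ))]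
    have h2 : (0 : ℝ) ≤ K / (2 * c) := by positivity
    calc K / (2 * c) * (k : ℝ) * ((n : ℝ) + 1 - (k : ℝ))
        = K / (2 * c) * ((k : ℝ) * ((n : ℝ) + 1 - (k : ℝ))) := by ring
      _ ≤ K / (2 * c) * (((n : ℝ) + 1) ^ 2 / 4) := mul_le_mul_of_nonneg_left h1 h2
      _ = K * ((n : ℝ) + 1) ^ 2 / (8 * c) := by ring
  have hfinal : M ≤ K / (2 * r) := by
    have h9 : K * ((n : ℝ) + 1) ^ 2 / (8 * c) ≤ K / (2 * r) := by
      rw [div_le_div_iff₀ (by positivity) (by positivity)]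
      nlinarith
    linarith
  have hMr : M ≤ b0 / r := by
    rw [le_div_iff₀ hr]
    have h10 : 2 * r * M ≤ K := by
      have h11 : 0 < 2 * r := by positivity
      calc 2 * r * M ≤ 2 * r * (K / (2 * r)) := mul_le_mul_of_nonneg_left hfinal h11.le
        _ = K := by field_simp
    simp only [hK] at h10
    linarith
  intro i hi
  rcases Nat.eq_zero_or_pos i with h | h
  · subst h
    rw [hX0]
    simp only [norm_zero]
    positivity
  rcases Nat.lt_or_ge i (n + 1) with h' | h'
  · have : m i ≤ M := hkmax i (Finset.mem_Icc.mpr ⟨by omega, by omega⟩)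
    calc ‖X i‖ = m i := rfl
      _ ≤ M := this
      _ ≤ b0 / r := hMr
  · have : i = n + 1 := by omega
    subst this
    rw [hXn]
    simp only [norm_zero]
    positivity

theorem stmt8 (N : ℕ) (hN : 1 ≤ N) (α τ βhat βj : ℝ)
    (hα0 : 0 < α) (hα : α ≤ Real.pi / 4) (hτ : 0 < τ)
    (hβhat : 0 < βhat) (hβ : βhat ≤ βj)
    (θ : ℝ) (hθ : |θ| ≤ α) (z : ℂ)
    (hz : z = -(((4 * βhat * τ : ℝ) : ℂ) * Complex.exp (↑θ * Complex.I))) :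
    IsUnit (z • (1 : Matrix (Fin N) (Fin N) ℂ) -
        ((τ * βj : ℝ) : ℂ) • (lmat N).map Complex.ofReal) ∧
      matNormC (z • (1 : Matrix (Fin N) (Fin N) ℂ) -
          ((τ * βj : ℝ) : ℂ) • (lmat N).map Complex.ofReal)⁻¹
        ≤ 1 / (4 * βhat * τ) := by
  have hβj : 0 < βj := lt_of_lt_of_le hβhat hβ
  set r : ℝ := 4 * βhat * τ with hrdef
  have hr : (0 : ℝ) < r := by rw [hrdef]; positivity
  set c : ℝ := τ * βj * ((N : ℝ) + 1) ^ 2 with hcdef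
  have hc0 : (0 : ℝ) < c := by rw [hcdef]; positivity
  have hrc : r * ((N : ℝ) + 1) ^ 2 / 4 ≤ c := by
    rw [hrdef, hcdef]
    have hsq : (0 : ℝ) ≤ ((N : ℝ) + 1) ^ 2 := by positivity
    nlinarith
  have hzre : -r ≤ z.re := by
    rw [hz]
    have h1 : (-(((4 * βhat * τ : ℝ) : ℂ) * Complex.exp ((θ : ℂ) * Complex.I))).re
        = -((4 * βhat * τ) * Real.cos θ) := by
      rw [Complex.neg_re, Complex.re_ofReal_mul, Complex.exp_ofReal_mul_I_re]
    rw [h1, hrdef]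
    have := Real.cos_le_one θ
    nlinarith
  set A := z • (1 : Matrix (Fin N) (Fin N) ℂ) -
      ((τ * βj : ℝ) : ℂ) • (lmat N).map Complex.ofReal with hA
  have hAentry : ∀ i j : Fin N, A i j =
      (if (i : ℕ) = (j : ℕ) then z + 2 * (c : ℂ)
       else if ((i : ℕ) + 1 = (j : ℕ) ∨ (j : ℕ) + 1 = (i : ℕ)) then -(c : ℂ) else 0) := by
    intro i j
    have hone : (1 : Matrix (Fin N) (Fin N) ℂ) i j = if (i : ℕ) = (j : ℕ) then 1 else 0 := by
      rw [Matrix.one_apply]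
      by_cases h : i = j
      · rw [if_pos h, if_pos (congrArg Fin.val h)]
      · rw [if_neg h, if_neg (fun hh => h (Fin.ext hh))]
    simp only [hA, Matrix.sub_apply, Matrix.smul_apply, Matrix.map_apply, lmat,
      Matrix.of_apply, smul_eq_mul, hone]
    by_cases h1 : (i : ℕ) = (j : ℕ)
    · rw [if_pos h1, if_pos h1, if_pos h1, hcdef]
      push_cast
      ring
    · rw [if_neg h1, if_neg h1, if_neg h1]
      by_cases h2 : ((i : ℕ) + 1 = (j : ℕ) ∨ (j : ℕ) + 1 = (i : ℕ))
      · rw [if_pos h2, if_pos h2, hcdef]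
        push_cast
        ring
      · rw [if_neg h2, if_neg h2]
        push_cast
        ring
  -- evaluating sums with a single active index
  have hsum : ∀ (g : Fin N → ℂ) (t : ℕ),
      (∑ j : Fin N, if (j : ℕ) = t then g j else 0)
        = if h : t < N then g ⟨t, h⟩ else 0 := by
    intro g t
    by_cases h : t < N
    · rw [dif_pos h]
      have hiff : ∀ j : Fin N, ((j : ℕ) = t) ↔ (j = ⟨t, h⟩) := by
        intro j
        constructor
        · intro hh; exact Fin.ext hh
        · intro hh; exact congrArg Fin.val hh
      simp_rw [hiff]
      simp
    · rw [dif_neg h]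
      apply Finset.sum_eq_zero
      intro j _
      rw [if_neg]
      have := j.isLt
      omega
  -- the mulVec formula
  have hmv : ∀ (x : Fin N → ℂ) (k : ℕ) (hk1 : 1 ≤ k) (hkN : k ≤ N),
      A.mulVec x ⟨k - 1, by omega⟩
        = (z + 2 * (c : ℂ)) * ext0 x k - (c : ℂ) * ext0 x (k - 1)
            - (c : ℂ) * ext0 x (k + 1) := by
    intro x k hk1 hkN
    have hsplit : ∀ j : Fin N, A ⟨k - 1, by omega⟩ j * x j =
        (if (j : ℕ) = k - 1 then (z + 2 * (c : ℂ)) * x j else 0)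
        + (if ((j : ℕ) = k - 2 ∧ 2 ≤ k) then -(c : ℂ) * x j else 0)
        + (if (j : ℕ) = k then -(c : ℂ) * x j else 0) := by
      intro j
      rw [hAentry]
      have hjlt := j.isLt
      have hival : ((⟨k - 1, by omega⟩ : Fin N) : ℕ) = k - 1 := rfl
      simp only [hival]
      split_ifs <;> first | (exfalso; omega) | ring1
    have hmveq : A.mulVec x ⟨k - 1, by omega⟩ = ∑ j, A ⟨k - 1, by omega⟩ j * x j := rfl
    rw [hmveq]
    calc (∑ j, A ⟨k - 1, by omega⟩ j * x j)
        = ∑ j : Fin N, ((if (j : ℕ) = k - 1 then (z + 2 * (c : ℂ)) * x j else 0)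
            + (if ((j : ℕ) = k - 2 ∧ 2 ≤ k) then -(c : ℂ) * x j else 0)
            + (if (j : ℕ) = k then -(c : ℂ) * x j else 0)) :=
          Finset.sum_congr rfl (fun j _ => hsplit j)
      _ = (∑ j : Fin N, if (j : ℕ) = k - 1 then (z + 2 * (c : ℂ)) * x j else 0)
            + (∑ j : Fin N, if ((j : ℕ) = k - 2 ∧ 2 ≤ k) then -(c : ℂ) * x j else 0)
            + (∑ j : Fin N, if (j : ℕ) = k then -(c : ℂ) * x j else 0) := by
          rw [Finset.sum_add_distrib, Finset.sum_add_distrib]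
      _ = (z + 2 * (c : ℂ)) * ext0 x k - (c : ℂ) * ext0 x (k - 1)
            - (c : ℂ) * ext0 x (k + 1) := by
          have ht1 : (∑ j : Fin N, if (j : ℕ) = k - 1 then (z + 2 * (c : ℂ)) * x j else 0)
              = (z + 2 * (c : ℂ)) * ext0 x k := by
            rw [hsum (fun j => (z + 2 * (c : ℂ)) * x j) (k - 1), dif_pos (by omega : k - 1 < N)]
            rw [ext0, dif_pos ⟨hk1, hkN⟩]
          have ht2 : (∑ j : Fin N, if ((j : ℕ) = k - 2 ∧ 2 ≤ k) then -(c : ℂ) * x j else 0)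
              = -(c : ℂ) * ext0 x (k - 1) := by
            by_cases h2k : 2 ≤ k
            · have hcond : ∀ j : Fin N, ((j : ℕ) = k - 2 ∧ 2 ≤ k) ↔ ((j : ℕ) = k - 2) := by
                intro j; constructor
                · exact fun h => h.1
                · exact fun h => ⟨h, h2k⟩
              simp_rw [hcond]
              rw [hsum (fun j => -(c : ℂ) * x j) (k - 2), dif_pos (by omega : k - 2 < N)]
              rw [ext0, dif_pos (by omega : 1 ≤ k - 1 ∧ k - 1 ≤ N)]
              congr 2
            · have hall : (∑ j : Fin N, if ((j : ℕ) = k - 2 ∧ 2 ≤ k) then -(c : ℂ) * x j else 0)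
                  = 0 := by
                apply Finset.sum_eq_zero
                intro j _
                rw [if_neg]
                omega
              rw [hall, ext0, dif_neg (by omega : ¬(1 ≤ k - 1 ∧ k - 1 ≤ N))]
              ring
          have ht3 : (∑ j : Fin N, if (j : ℕ) = k then -(c : ℂ) * x j else 0)
              = -(c : ℂ) * ext0 x (k + 1) := by
            rw [hsum (fun j => -(c : ℂ) * x j) k]
            by_cases hkN' : k < N
            · rw [dif_pos hkN', ext0, dif_pos (by omega : 1 ≤ k + 1 ∧ k + 1 ≤ N)]
              congr 2
            · rw [dif_neg hkN', ext0, dif_neg (by omega : ¬(1 ≤ k + 1 ∧ k + 1 ≤ N))]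
              ring
          rw [ht1, ht2, ht3]
          ring
  -- injectivity, hence invertibility
  have hker : ∀ x : Fin N → ℂ, A.mulVec x = 0 → x = 0 := by
    intro x hx
    have hbnd := main_bound N hN r c 0 hr hrc le_rfl z hzre (ext0 x) (fun _ => 0)
      (by exact dif_neg (by omega)) (by exact dif_neg (by omega))
      (fun i => by simp)
      (fun i h1 h2 => by
        rw [← hmv x i h1 h2, hx]
        rfl)
    funext j
    have h1 : ext0 x ((j : ℕ) + 1) = x j := by
      rw [ext0, dif_pos ⟨by omega, by omega⟩]
      congr 1
    have h2 := hbnd ((j : ℕ) + 1) (by omega)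
    rw [h1] at h2
    have h3 : ‖x j‖ ≤ 0 := by
      rw [zero_div] at h2
      exact h2
    have h4 : ‖x j‖ = 0 := le_antisymm h3 (norm_nonneg _)
    simpa using norm_eq_zero.mp h4
  have hinj : Function.Injective A.mulVec := by
    intro x y hxy
    have h0 : A.mulVec (x - y) = 0 := by
      rw [Matrix.mulVec_sub, hxy, sub_self]
    have := hker _ h0
    exact sub_eq_zero.mp this
  have hunit : IsUnit A := Matrix.mulVec_injective_iff_isUnit.mp hinj
  refine ⟨hunit, ?_⟩
  have hdet : IsUnit A.det := (Matrix.isUnit_iff_isUnit_det A).mp hunit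
  have hAAinv : A * A⁻¹ = 1 := Matrix.mul_nonsing_inv A hdet
  rw [matNormC]
  haveI : Nonempty (Fin N) := ⟨⟨0, by omega⟩⟩
  apply ciSup_le
  intro i
  set b : Fin N → ℂ := fun j => if A⁻¹ i j = 0 then 0
    else ((‖A⁻¹ i j‖ : ℝ) : ℂ) / A⁻¹ i j with hbdef
  have hb1 : ∀ j, ‖b j‖ ≤ 1 := by
    intro j
    rw [hbdef]
    by_cases h : A⁻¹ i j = 0
    · simp [h]
    · simp only [h, if_false]
      rw [norm_div, Complex.norm_of_nonneg (norm_nonneg _),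
        div_self (norm_ne_zero_iff.mpr h)]
  set x : Fin N → ℂ := A⁻¹.mulVec b with hxdef
  have hax : A.mulVec x = b := by
    rw [hxdef, Matrix.mulVec_mulVec, hAAinv, Matrix.one_mulVec]
  have hbnd := main_bound N hN r c 1 hr hrc zero_le_one z hzre (ext0 x) (ext0 b)
    (by exact dif_neg (by omega)) (by exact dif_neg (by omega))
    (fun k => by
      simp only [ext0]
      split
      · exact hb1 _
      · simp)
    (fun k h1 h2 => by
      rw [← hmv x k h1 h2, hax]
      unfold ext0
      rw [dif_pos (⟨h1, h2⟩ : 1 ≤ k ∧ k ≤ N)])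
  have hxi : x i = ((∑ j, ‖A⁻¹ i j‖ : ℝ) : ℂ) := by
    rw [hxdef]
    have : A⁻¹.mulVec b i = ∑ j, A⁻¹ i j * b j := rfl
    rw [this]
    push_cast
    apply Finset.sum_congr rfl
    intro j _
    by_cases h : A⁻¹ i j = 0
    · simp [hbdef, h]
    · rw [hbdef]
      simp only [h, if_false]
      rw [mul_div_assoc', mul_comm, mul_div_assoc, div_self h, mul_one]
  have hsum_eq : ∑ j, ‖A⁻¹ i j‖ = ‖x i‖ := by
    rw [hxi, Complex.norm_of_nonneg
      (Finset.sum_nonneg fun j _ => norm_nonneg _)]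
  rw [hsum_eq]
  have hx1 : x i = ext0 x ((i : ℕ) + 1) := by
    rw [ext0, dif_pos ⟨by omega, by omega⟩]
    congr 1
  rw [hx1]
  have := hbnd ((i : ℕ) + 1) (by omega)
  calc ‖ext0 x ((i : ℕ) + 1)‖ ≤ 1 / r := this
    _ = 1 / (4 * βhat * τ) := by rw [hrdef]
end

section
/- Let N ≥ 1, Δx = 1/(N+1), L_N = (1/Δx²)·tridiag(1,−2,1), let 0 < α ≤ π/4, τ > 0 and β > 0. For every z = −ρ·e^{±iα} with ρ > 0, the matrix zI − τβL_N is invertible and ‖(zI − τβL_N)⁻¹‖_∞ ≤ 1/(ρ·sin(α/2)). -/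
open scoped BigOperators

private lemma aux_sq_le {A B : ℝ} (hA : 0 ≤ A) (hB : 0 ≤ B) (h : A^2 ≤ B^2) : A ≤ B := by
  nlinarith

/-- The Green's function (inverse kernel) of the shifted tridiagonal matrix. -/
private noncomputable def Gf (N : ℕ) (μ Dinv : ℂ) : ℕ → ℕ → ℂ := fun a b =>
  (1 - (μ^2)^(min a b)) * (1 - (μ^2)^((N+1) - max a b)) * μ^(max a b - min a b) * Dinv

private lemma Gf_zero (N : ℕ) (μ Dinv : ℂ) (b : ℕ) : Gf N μ Dinv 0 b = 0 := by
  simp [Gf, Nat.min_eq_left (Nat.zero_le b)]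

private lemma Gf_top (N : ℕ) (μ Dinv : ℂ) (b : ℕ) (hb : b ≤ N) : Gf N μ Dinv (N+1) b = 0 := by
  have h1 : max (N+1) b = N+1 := by omega
  have h2 : (N+1) - (N+1) = 0 := by omega
  simp [Gf, h1, h2]

private lemma green_rec (N : ℕ) (z c μ Dinv : ℂ)
    (hE : c*(1-μ^2)*(1-(μ^2)^(N+1)) ≠ 0)
    (hDinv : Dinv * (c*(1-μ^2)*(1-(μ^2)^(N+1))) = μ)
    (hroot : c*μ^2 + c = (z+2*c)*μ)
    (I J : ℕ) (hI1 : 1 ≤ I) (hIN : I ≤ N) (hJ1 : 1 ≤ J) (hJN : J ≤ N) :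
    (z + 2*c) * Gf N μ Dinv I J - c * Gf N μ Dinv (I-1) J - c * Gf N μ Dinv (I+1) J
      = if I = J then 1 else 0 := by
  rcases lt_trichotomy I J with hlt | heq | hgt
  · rw [if_neg (by omega)]
    obtain ⟨a, rfl⟩ : ∃ a, I = a + 1 := ⟨I - 1, by omega⟩
    obtain ⟨t, rfl⟩ : ∃ t, J = a+1+t+1 := ⟨J - (a+1) - 1, by omega⟩
    obtain ⟨e, he⟩ : ∃ e, (N+1) - (a+1+t+1) = e + 1 := ⟨N - (a+1+t+1), by omega⟩
    simp only [Gf, Nat.add_sub_cancel,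
      show min (a+1) (a+1+t+1) = a+1 from by omega,
      show min a (a+1+t+1) = a from by omega,
      show min (a+1+1) (a+1+t+1) = a+1+1 from by omega,
      show max (a+1) (a+1+t+1) = a+1+t+1 from by omega,
      show max a (a+1+t+1) = a+1+t+1 from by omega,
      show max (a+1+1) (a+1+t+1) = a+1+t+1 from by omega,
      show a+1+t+1 - (a+1) = t+1 from by omega,
      show a+1+t+1 - a = t+2 from by omega,
      show a+1+t+1 - (a+1+1) = t from by omega, he]
    have key : (z+2*c) * ((1 - (μ^2)^(a+1)) * μ^(t+1))
        - c * ((1 - (μ^2)^a) * μ^(t+2)) - c * ((1 - (μ^2)^(a+1+1)) * μ^t) = 0 := by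
      linear_combination (-((1 - (μ^2)^(a+1)) * μ^t)) * hroot
    calc (z + 2*c) * ((1 - (μ^2)^(a+1)) * (1 - (μ^2)^(e+1)) * μ^(t+1) * Dinv)
          - c * ((1 - (μ^2)^a) * (1 - (μ^2)^(e+1)) * μ^(t+2) * Dinv)
          - c * ((1 - (μ^2)^(a+1+1)) * (1 - (μ^2)^(e+1)) * μ^t * Dinv)
        = ((z+2*c) * ((1 - (μ^2)^(a+1)) * μ^(t+1))
            - c * ((1 - (μ^2)^a) * μ^(t+2)) - c * ((1 - (μ^2)^(a+1+1)) * μ^t))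
            * ((1 - (μ^2)^(e+1)) * Dinv) := by ring
      _ = 0 := by rw [key, zero_mul]
  · subst heq
    rw [if_pos rfl]
    obtain ⟨a, rfl⟩ : ∃ a, I = a + 1 := ⟨I - 1, by omega⟩
    obtain ⟨b, rfl⟩ : ∃ b, N = a+1+b := ⟨N - (a+1), by omega⟩
    simp only [Gf, Nat.add_sub_cancel,
      show min (a+1) (a+1) = a+1 from by omega,
      show min a (a+1) = a from by omega,
      show min (a+1+1) (a+1) = a+1 from by omega,
      show max (a+1) (a+1) = a+1 from by omega,
      show max a (a+1) = a+1 from by omega,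
      show max (a+1+1) (a+1) = a+1+1 from by omega,
      show a+1 - (a+1) = 0 from by omega,
      show a+1 - a = 1 from by omega,
      show a+1+1 - (a+1) = 1 from by omega,
      show a+1+b+1 - (a+1) = b+1 from by omega,
      show a+1+b+1 - (a+1+1) = b from by omega]
    have key : ((z+2*c) * ((1 - (μ^2)^(a+1)) * (1 - (μ^2)^(b+1)) * μ^0)
        - c * ((1 - (μ^2)^a) * (1 - (μ^2)^(b+1)) * μ^1)
        - c * ((1 - (μ^2)^(a+1)) * (1 - (μ^2)^b) * μ^1)) * μ
        = c*(1-μ^2)*(1-(μ^2)^(a+1+b+1)) := by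
      linear_combination (-((1 - (μ^2)^(a+1)) * (1 - (μ^2)^(b+1)))) * hroot
    have h2 : (((z+2*c) * ((1 - (μ^2)^(a+1)) * (1 - (μ^2)^(b+1)) * μ^0 * Dinv)
        - c * ((1 - (μ^2)^a) * (1 - (μ^2)^(b+1)) * μ^1 * Dinv)
        - c * ((1 - (μ^2)^(a+1)) * (1 - (μ^2)^b) * μ^1 * Dinv)) - 1)
        * (c*(1-μ^2)*(1-(μ^2)^(a+1+b+1))) = 0 := by
      linear_combination key
        + ((z+2*c) * ((1 - (μ^2)^(a+1)) * (1 - (μ^2)^(b+1)) * μ^0)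
          - c * ((1 - (μ^2)^a) * (1 - (μ^2)^(b+1)) * μ^1)
          - c * ((1 - (μ^2)^(a+1)) * (1 - (μ^2)^b) * μ^1)) * hDinv
    have := (mul_eq_zero.1 h2).resolve_right hE
    linear_combination this
  · rw [if_neg (by omega)]
    obtain ⟨t, rfl⟩ : ∃ t, I = J+t+1 := ⟨I - J - 1, by omega⟩
    obtain ⟨f, hf⟩ : ∃ f, (N+1) - (J+t+1) = f + 1 := ⟨N - (J+t+1), by omega⟩
    simp only [Gf, Nat.add_sub_cancel,
      show min (J+t+1) J = J from by omega,
      show min (J+t) J = J from by omega,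
      show min (J+t+1+1) J = J from by omega,
      show max (J+t+1) J = J+t+1 from by omega,
      show max (J+t) J = J+t from by omega,
      show max (J+t+1+1) J = J+t+1+1 from by omega,
      show J+t+1 - J = t+1 from by omega,
      show J+t - J = t from by omega,
      show J+t+1+1 - J = t+2 from by omega, hf,
      show (N+1) - (J+t) = f+2 from by omega,
      show (N+1) - (J+t+1+1) = f from by omega]
    have key : (z+2*c) * ((1 - (μ^2)^(f+1)) * μ^(t+1))
        - c * ((1 - (μ^2)^(f+2)) * μ^t) - c * ((1 - (μ^2)^f) * μ^(t+2)) = 0 := by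
      linear_combination (-((1 - (μ^2)^(f+1)) * μ^t)) * hroot
    calc (z + 2*c) * ((1 - (μ^2)^J) * (1 - (μ^2)^(f+1)) * μ^(t+1) * Dinv)
          - c * ((1 - (μ^2)^J) * (1 - (μ^2)^(f+2)) * μ^t * Dinv)
          - c * ((1 - (μ^2)^J) * (1 - (μ^2)^f) * μ^(t+2) * Dinv)
        = ((z+2*c) * ((1 - (μ^2)^(f+1)) * μ^(t+1))
            - c * ((1 - (μ^2)^(f+2)) * μ^t) - c * ((1 - (μ^2)^f) * μ^(t+2)))
            * ((1 - (μ^2)^J) * Dinv) := by ring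
      _ = 0 := by rw [key, zero_mul]

private lemma mat_mul_green (N : ℕ) (z c : ℂ) (Amat G : Matrix (Fin N) (Fin N) ℂ)
    (hA : ∀ i k : Fin N, Amat i k = (if (i:ℕ) = (k:ℕ) then z + 2*c else 0)
      + (if (i:ℕ)+1 = (k:ℕ) then -c else 0) + (if (k:ℕ)+1 = (i:ℕ) then -c else 0))
    (Gfun : ℕ → ℕ → ℂ) (hG : ∀ i j : Fin N, G i j = Gfun ((i:ℕ)+1) ((j:ℕ)+1))
    (hG0 : ∀ b, Gfun 0 b = 0) (hGM : ∀ b, b ≤ N → Gfun (N+1) b = 0)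
    (hrec : ∀ I J : ℕ, 1 ≤ I → I ≤ N → 1 ≤ J → J ≤ N →
      (z+2*c) * Gfun I J - c * Gfun (I-1) J - c * Gfun (I+1) J = if I = J then 1 else 0) :
    Amat * G = 1 := by
  ext i j
  rw [Matrix.mul_apply]
  have hsplit : ∀ k : Fin N, Amat i k * G k j
      = (if (i:ℕ) = (k:ℕ) then (z + 2*c) * Gfun ((k:ℕ)+1) ((j:ℕ)+1) else 0)
      + (if (i:ℕ)+1 = (k:ℕ) then -c * Gfun ((k:ℕ)+1) ((j:ℕ)+1) else 0)
      + (if (k:ℕ)+1 = (i:ℕ) then -c * Gfun ((k:ℕ)+1) ((j:ℕ)+1) else 0) := by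
    intro k
    rw [hA, hG]
    split_ifs <;> ring
  rw [Finset.sum_congr rfl (fun k _ => hsplit k)]
  rw [Finset.sum_add_distrib, Finset.sum_add_distrib]
  have hS1 : ∑ k : Fin N, (if (i:ℕ) = (k:ℕ) then (z + 2*c) * Gfun ((k:ℕ)+1) ((j:ℕ)+1) else 0)
      = (z + 2*c) * Gfun ((i:ℕ)+1) ((j:ℕ)+1) := by
    rw [Finset.sum_eq_single i]
    · simp
    · intro b _ hb
      rw [if_neg (fun h => hb ((Fin.ext h).symm))]
    · intro h; exact absurd (Finset.mem_univ i) h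
  have hS2 : ∑ k : Fin N, (if (i:ℕ)+1 = (k:ℕ) then -c * Gfun ((k:ℕ)+1) ((j:ℕ)+1) else 0)
      = -c * Gfun ((i:ℕ)+2) ((j:ℕ)+1) := by
    by_cases hi : (i:ℕ)+1 < N
    · rw [Finset.sum_eq_single (⟨(i:ℕ)+1, hi⟩ : Fin N)]
      · rw [if_pos (by simp)]
      · intro b _ hb
        rw [if_neg (fun h => hb (Fin.ext h.symm))]
      · intro h; exact absurd (Finset.mem_univ _) h
    · have hiN : (i:ℕ) + 1 = N := by omega
      rw [Finset.sum_eq_zero, show (i:ℕ)+2 = N+1 by omega, hGM _ (by omega), mul_zero]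
      intro b _
      rw [if_neg (by omega)]
  have hS3 : ∑ k : Fin N, (if (k:ℕ)+1 = (i:ℕ) then -c * Gfun ((k:ℕ)+1) ((j:ℕ)+1) else 0)
      = -c * Gfun ((i:ℕ)) ((j:ℕ)+1) := by
    by_cases hi : 0 < (i:ℕ)
    · rw [Finset.sum_eq_single (⟨(i:ℕ)-1, by omega⟩ : Fin N)]
      · rw [if_pos (by simp; omega)]
        congr 2
        simp; omega
      · intro b _ hb
        rw [if_neg (fun h => hb (Fin.ext (by simp; omega)))]
      · intro h; exact absurd (Finset.mem_univ _) h
    · have hiz : (i:ℕ) = 0 := by omega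
      rw [Finset.sum_eq_zero, hiz, hG0, mul_zero]
      intro b _
      rw [if_neg (by omega)]
  rw [hS1, hS2, hS3]
  have hr := hrec ((i:ℕ)+1) ((j:ℕ)+1) (by omega) (by omega) (by omega) (by omega)
  rw [show (i:ℕ)+1-1 = (i:ℕ) by omega, show (i:ℕ)+1+1 = (i:ℕ)+2 by omega] at hr
  rw [Matrix.one_apply]
  have heq : ((i:ℕ)+1 = (j:ℕ)+1) ↔ (i = j) := by
    constructor
    · intro h; exact Fin.ext (by omega)
    · intro h; rw [h]
  rw [show (z + 2*c) * Gfun ((i:ℕ)+1) ((j:ℕ)+1) + -c * Gfun ((i:ℕ)+2) ((j:ℕ)+1)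
      + -c * Gfun ((i:ℕ)) ((j:ℕ)+1)
      = (z+2*c) * Gfun ((i:ℕ)+1) ((j:ℕ)+1) - c * Gfun ((i:ℕ)) ((j:ℕ)+1)
        - c * Gfun ((i:ℕ)+2) ((j:ℕ)+1) by ring, hr]
  by_cases h : i = j
  · rw [if_pos (by rw [heq]; exact h), if_pos h]
  · rw [if_neg (by rw [heq]; exact h), if_neg h]

private lemma resolvent_term_bound (x : ℂ) (Mn a u : ℕ)
    (hxM : (1:ℂ) - x^Mn ≠ 0) :
    ‖(1-x^a)*(1-x^u)‖ * (1 - (‖x‖)^Mn)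
      ≤ ‖1-x^Mn‖ * ((1+(‖x‖)^a)*(1+(‖x‖)^u)) := by
  set w : ℂ := ((1-x^a)*(1-x^u))/(1-x^Mn) with hwdef
  have hw : (1-x^a)*(1-x^u) = w * (1-x^Mn) := (div_mul_cancel₀ _ hxM).symm
  have habs1 : ∀ y : ℂ, ∀ n : ℕ, ‖1 - y^n‖ ≤ 1 + (‖y‖)^n := by
    intro y n
    calc ‖1 - y^n‖ ≤ ‖(1:ℂ)‖ + ‖y^n‖ := by
          exact norm_sub_le _ _
      _ = 1 + (‖y‖)^n := by simp [norm_pow]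
  have hprod : ‖(1-x^a)*(1-x^u)‖ ≤ (1+(‖x‖)^a)*(1+(‖x‖)^u) := by
    rw [norm_mul]
    exact mul_le_mul (habs1 x a) (habs1 x u) (norm_nonneg _) (by positivity)
  have hw2 : w = w * x^Mn + (1-x^a)*(1-x^u) := by rw [hw]; ring
  have h3 : ‖w‖ * (1 - (‖x‖)^Mn)
      ≤ (1+(‖x‖)^a)*(1+(‖x‖)^u) := by
    have : ‖w‖ ≤ ‖w‖ * (‖x‖)^Mn
        + (1+(‖x‖)^a)*(1+(‖x‖)^u) := by
      calc ‖w‖ = ‖w * x^Mn + (1-x^a)*(1-x^u)‖ := by rw [← hw2]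
        _ ≤ ‖w * x^Mn‖ + ‖(1-x^a)*(1-x^u)‖ := norm_add_le _ _
        _ ≤ ‖w‖ * (‖x‖)^Mn
            + (1+(‖x‖)^a)*(1+(‖x‖)^u) := by
          rw [norm_mul, norm_pow]
          exact add_le_add le_rfl hprod
    linarith
  calc ‖(1-x^a)*(1-x^u)‖ * (1 - (‖x‖)^Mn)
      = (‖w‖ * (1 - (‖x‖)^Mn)) * ‖1-x^Mn‖ := by
        rw [hw, norm_mul]; ring
    _ ≤ ((1+(‖x‖)^a)*(1+(‖x‖)^u)) * ‖1-x^Mn‖ :=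
        mul_le_mul_of_nonneg_right h3 (norm_nonneg _)
    _ = ‖1-x^Mn‖ * ((1+(‖x‖)^a)*(1+(‖x‖)^u)) := by ring

private lemma Gf_abs_bound (N : ℕ) (μ Dinv : ℂ) (hm1 : ‖μ‖ < 1)
    (hxM : (1:ℂ) - (μ^2)^(N+1) ≠ 0) (A B : ℕ) :
    ‖Gf N μ Dinv A B‖ * (1 - ((‖μ‖)^2)^(N+1))
      ≤ (‖1-(μ^2)^(N+1)‖ * ‖Dinv‖) *
        ((‖μ‖)^(max A B - min A B) * (1+((‖μ‖)^2)^(min A B))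
          * (1+((‖μ‖)^2)^((N+1) - max A B))) := by
  have hxabs : ‖μ^2‖ = (‖μ‖)^2 := norm_pow _ _
  have h := resolvent_term_bound (μ^2) (N+1) (min A B) ((N+1) - max A B) hxM
  rw [hxabs] at h
  have habsG : ‖Gf N μ Dinv A B‖
      = ‖(1-(μ^2)^(min A B)) * (1-(μ^2)^((N+1) - max A B))‖
        * ((‖μ‖)^(max A B - min A B) * ‖Dinv‖) := by
    simp only [Gf, norm_mul, norm_pow]
    ring
  rw [habsG]
  have hnn : 0 ≤ (‖μ‖)^(max A B - min A B) * ‖Dinv‖ := by positivity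
  calc ‖(1-(μ^2)^(min A B)) * (1-(μ^2)^((N+1) - max A B))‖
        * ((‖μ‖)^(max A B - min A B) * ‖Dinv‖)
        * (1 - ((‖μ‖)^2)^(N+1))
      = (‖(1-(μ^2)^(min A B)) * (1-(μ^2)^((N+1) - max A B))‖
          * (1 - ((‖μ‖)^2)^(N+1)))
        * ((‖μ‖)^(max A B - min A B) * ‖Dinv‖) := by ring
    _ ≤ (‖1-(μ^2)^(N+1)‖
          * ((1+((‖μ‖)^2)^(min A B))*(1+((‖μ‖)^2)^((N+1) - max A B))))
        * ((‖μ‖)^(max A B - min A B) * ‖Dinv‖) :=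
        mul_le_mul_of_nonneg_right h hnn
    _ = (‖1-(μ^2)^(N+1)‖ * ‖Dinv‖) *
        ((‖μ‖)^(max A B - min A B) * (1+((‖μ‖)^2)^(min A B))
          * (1+((‖μ‖)^2)^((N+1) - max A B))) := by ring

private lemma sum_bound (N I : ℕ) (m : ℝ) (hm0 : 0 ≤ m) (hm1 : m < 1)
    (hI1 : 1 ≤ I) (hIN : I ≤ N) :
    (∑ t ∈ Finset.range N, m^(max I (t+1) - min I (t+1))
        * (1+(m^2)^(min I (t+1))) * (1+(m^2)^((N+1) - max I (t+1)))) * (1-m)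
      ≤ (1+m) * (1-(m^2)^(N+1)) := by
  have hg : ∀ n : ℕ, (∑ s ∈ Finset.range n, m^s) * (1-m) = 1 - m^n := fun n => by
    linear_combination (-1 : ℝ) * geom_sum_mul m n
  have hsplit : ∑ t ∈ Finset.range N, m^(max I (t+1) - min I (t+1))
        * (1+(m^2)^(min I (t+1))) * (1+(m^2)^((N+1) - max I (t+1)))
      = (∑ t ∈ Finset.Ico 0 I, m^(max I (t+1) - min I (t+1))
        * (1+(m^2)^(min I (t+1))) * (1+(m^2)^((N+1) - max I (t+1))))
      + (∑ t ∈ Finset.Ico I N, m^(max I (t+1) - min I (t+1))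
        * (1+(m^2)^(min I (t+1))) * (1+(m^2)^((N+1) - max I (t+1)))) := by
    rw [Finset.range_eq_Ico, ← Finset.sum_Ico_consecutive _ (Nat.zero_le I) hIN]
  have hreg1 : ∑ t ∈ Finset.Ico 0 I, m^(max I (t+1) - min I (t+1))
        * (1+(m^2)^(min I (t+1))) * (1+(m^2)^((N+1) - max I (t+1)))
      = ((∑ s ∈ Finset.range I, m^s) + m^(I+1) * (∑ s ∈ Finset.range I, m^s))
          * (1+(m^2)^(N+1-I)) := by
    have h1 : ∀ t ∈ Finset.Ico 0 I, m^(max I (t+1) - min I (t+1))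
        * (1+(m^2)^(min I (t+1))) * (1+(m^2)^((N+1) - max I (t+1)))
        = (m^(I-1-t) + m^(I+1+t)) * (1+(m^2)^(N+1-I)) := by
      intro t ht
      simp only [Finset.mem_Ico] at ht
      rw [show min I (t+1) = t+1 by omega, show max I (t+1) = I by omega,
          show I - (t+1) = I-1-t by omega, show (N+1) - I = N+1-I by omega]
      have e2 : m^(I-1-t) * (m^2)^(t+1) = m^(I+1+t) := by
        rw [← pow_mul, ← pow_add]; congr 1; omega
      calc m^(I-1-t) * (1+(m^2)^(t+1)) * (1+(m^2)^(N+1-I))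
          = (m^(I-1-t) + m^(I-1-t) * (m^2)^(t+1)) * (1+(m^2)^(N+1-I)) := by ring
        _ = (m^(I-1-t) + m^(I+1+t)) * (1+(m^2)^(N+1-I)) := by rw [e2]
    rw [Finset.sum_congr rfl h1, ← Finset.sum_mul]
    congr 1
    rw [show Finset.Ico 0 I = Finset.range I from by rw [Finset.range_eq_Ico]]
    rw [Finset.sum_add_distrib]
    congr 1
    · exact Finset.sum_range_reflect (fun s => m^s) I
    · rw [Finset.mul_sum]
      apply Finset.sum_congr rfl
      intro t _
      rw [← pow_add]
  have hreg2 : ∑ t ∈ Finset.Ico I N, m^(max I (t+1) - min I (t+1))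
        * (1+(m^2)^(min I (t+1))) * (1+(m^2)^((N+1) - max I (t+1)))
      = (1+(m^2)^I) * (m * (∑ s ∈ Finset.range (N-I), m^s)
          + m^(N-I+2) * (∑ s ∈ Finset.range (N-I), m^s)) := by
    have h1 : ∀ t ∈ Finset.Ico I N, m^(max I (t+1) - min I (t+1))
        * (1+(m^2)^(min I (t+1))) * (1+(m^2)^((N+1) - max I (t+1)))
        = (1+(m^2)^I) * (m^(t+1-I) + m^(2*N+1-I-t)) := by
      intro t ht
      simp only [Finset.mem_Ico] at ht
      rw [show min I (t+1) = I by omega, show max I (t+1) = t+1 by omega,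
          show (t+1) - I = t+1-I by omega, show (N+1) - (t+1) = N-t by omega]
      have e2 : m^(t+1-I) * (m^2)^(N-t) = m^(2*N+1-I-t) := by
        rw [← pow_mul, ← pow_add]; congr 1; omega
      calc m^(t+1-I) * (1+(m^2)^I) * (1+(m^2)^(N-t))
          = (1+(m^2)^I) * (m^(t+1-I) + m^(t+1-I) * (m^2)^(N-t)) := by ring
        _ = (1+(m^2)^I) * (m^(t+1-I) + m^(2*N+1-I-t)) := by rw [e2]
    rw [Finset.sum_congr rfl h1, ← Finset.mul_sum]
    congr 1
    rw [Finset.sum_add_distrib]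
    congr 1
    · rw [Finset.sum_Ico_eq_sum_range, Finset.mul_sum]
      apply Finset.sum_congr rfl
      intro s _
      rw [← pow_succ']
      congr 1
      omega
    · rw [Finset.sum_Ico_eq_sum_range, Finset.mul_sum]
      rw [← Finset.sum_range_reflect (fun s => m^(N-I+2) * m^s) (N-I)]
      apply Finset.sum_congr rfl
      intro s hs
      simp only [Finset.mem_range] at hs
      rw [← pow_add]
      congr 1
      omega
  rw [hsplit, hreg1, hreg2]
  set gI := ∑ s ∈ Finset.range I, m^s with hgIdef
  set gQ := ∑ s ∈ Finset.range (N-I), m^s with hgQdef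
  have hgI' : gI * (1-m) = 1 - m^I := hg I
  have hgQ' : gQ * (1-m) = 1 - m^(N-I) := hg (N-I)
  set p := m^I with hp
  set q := m^(N-I) with hq
  have hp0 : 0 ≤ p := pow_nonneg hm0 I
  have hq0 : 0 ≤ q := pow_nonneg hm0 (N-I)
  have e1 : m^(I+1) = m * p := by rw [hp, ← pow_succ']
  have e2 : (m^2)^(N+1-I) = m^2 * q^2 := by
    rw [hq, ← pow_mul, ← pow_mul, ← pow_add]; congr 1; omega
  have e3 : (m^2)^I = p^2 := by rw [hp, ← pow_mul, ← pow_mul]; congr 1; omega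
  have e4 : m^(N-I+2) = m^2 * q := by rw [hq, ← pow_add]; congr 1; omega
  have e5 : (m^2)^(N+1) = m^2 * p^2 * q^2 := by
    rw [hp, hq, ← pow_mul, ← pow_mul, ← pow_mul, ← pow_add, ← pow_add]; congr 1; omega
  rw [e1, e2, e3, e4, e5]
  have hL : ((gI + m * p * gI) * (1 + m^2*q^2)
      + (1 + p^2) * (m * gQ + m^2*q * gQ)) * (1-m)
      = (1 + m^2*q^2) * (1 + m*p) * (1-p) + (1+p^2) * (m + m^2*q) * (1-q) := by
    calc ((gI + m * p * gI) * (1 + m^2*q^2) + (1 + p^2) * (m * gQ + m^2*q * gQ)) * (1-m)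
        = (1 + m^2*q^2) * (1 + m*p) * (gI * (1-m)) + (1+p^2) * (m + m^2*q) * (gQ * (1-m)) := by
          ring
      _ = (1 + m^2*q^2) * (1 + m*p) * (1-p) + (1+p^2) * (m + m^2*q) * (1-q) := by
          rw [hgI', hgQ']
  rw [hL]
  have hident : (1+m) * (1 - m^2*p^2*q^2)
      - ((1 + m^2*q^2) * (1 + m*p) * (1-p) + (1+p^2) * (m + m^2*q) * (1-q))
      = (1-m) * (p + m*q + m^2*p*q^2 + m*p^2*q) := by ring
  have hpos : 0 ≤ (1-m) * (p + m*q + m^2*p*q^2 + m*p^2*q) :=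
    mul_nonneg (by linarith) (by positivity)
  linarith [hident, hpos]

private lemma aux_ineqB (z μ : ℂ) (cR ρ α : ℝ) (hcR : 0 < cR) (hρ : 0 < ρ)
    (hα0 : 0 < α) (hαπ : α < Real.pi)
    (hzμ : (cR:ℂ) * (1-μ)^2 = z * μ)
    (hzre : z.re = -(ρ * Real.cos α)) (hzabs : ‖z‖ = ρ)
    (hμ0 : μ ≠ 0) (hm1 : ‖μ‖ < 1) :
    Real.sin (α/2) * (1 + ‖μ‖) * ‖1-μ‖
      ≤ (1 - ‖μ‖) * ‖1+μ‖ := by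
  set m := ‖μ‖ with hmdef
  have hm0 : 0 < m := norm_pos_iff.2 hμ0
  have hm2 : m^2 = μ.re^2 + μ.im^2 := by
    rw [hmdef, Complex.sq_norm, Complex.normSq_apply]; ring
  have hsin : 0 < Real.sin (α/2) :=
    Real.sin_pos_of_pos_of_lt_pi (by linarith) (by linarith [Real.pi_pos])
  have key2 : cR * (‖1-μ‖)^2 = ρ * m := by
    have := congrArg (fun w : ℂ => ‖w‖) hzμ
    rwa [norm_mul, norm_mul, norm_pow, Complex.norm_real, Real.norm_eq_abs, abs_of_pos hcR, hzabs] at this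
  have hconj : μ * (starRingEnd ℂ) μ = ((m^2 : ℝ) : ℂ) := by
    rw [Complex.mul_conj]
    norm_cast
    rw [hmdef, Complex.sq_norm]
  have e2c : (cR:ℂ) * ((1-μ)^2 * (starRingEnd ℂ) μ) = z * ((m^2 : ℝ) : ℂ) := by
    linear_combination ((starRingEnd ℂ) μ) * hzμ + z * hconj
  have e2 : cR * ((1-μ)^2 * (starRingEnd ℂ) μ).re = z.re * m^2 := by
    have := congrArg Complex.re e2c
    simpa [Complex.mul_re, Complex.mul_im, Complex.ofReal_re, Complex.ofReal_im, pow_two]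
      using this
  have e1 : ((1-μ)^2 * (starRingEnd ℂ) μ).re + m * Complex.normSq (1-μ)
      = (1-m)^2 * (μ.re + m) := by
    simp only [pow_two, Complex.mul_re, Complex.mul_im, Complex.sub_re, Complex.sub_im,
      Complex.one_re, Complex.one_im, Complex.conj_re, Complex.conj_im, Complex.normSq_apply]
    linear_combination (2 - μ.re - m) * hm2
  have key : cR * ((1-m)^2 * (μ.re + m)) = ρ * m^2 * (1 - Real.cos α) := by
    have h4 : cR * Complex.normSq (1-μ) = ρ * m := by
      rw [Complex.normSq_eq_norm_sq]; exact key2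
    linear_combination (-cR) * e1 + e2 + m * h4 + m^2 * hzre
  have hu : μ.re ≤ m := Complex.re_le_norm μ
  have hsinsq : 2 * Real.sin (α/2)^2 = 1 - Real.cos α := by
    have h1 := Real.sin_sq_eq_half_sub (α/2)
    have h2 : 2*(α/2) = α := by ring
    rw [h2] at h1
    linarith
  have habs1pμ : (‖1+μ‖)^2 = 1 + 2*μ.re + m^2 := by
    rw [Complex.sq_norm, Complex.normSq_apply]
    simp only [Complex.add_re, Complex.add_im, Complex.one_re, Complex.one_im]
    linear_combination (-1 : ℝ) * hm2
  have hcore : (μ.re + m) * (1+m)^2 ≤ 2*m*(1 + 2*μ.re + m^2) := by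
    nlinarith [mul_nonneg (sq_nonneg (1-m)) (sub_nonneg.2 hu)]
  have eL : (2*m*cR) * (Real.sin (α/2) * (1+m) * ‖1-μ‖)^2
      = (cR * ((1-m)^2 * (μ.re+m))) * (1+m)^2 := by
    linear_combination (2*m*(1+m)^2*Real.sin (α/2)^2) * key2
      + (ρ*m^2*(1+m)^2) * hsinsq - (1+m)^2 * key
  have eR : (2*m*cR) * ((1-m) * ‖1+μ‖)^2
      = (2*m*cR*(1-m)^2) * (1 + 2*μ.re + m^2) := by
    linear_combination (2*m*cR*(1-m)^2) * habs1pμ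
  have hsq : ((2*m*cR)) * (Real.sin (α/2) * (1+m) * ‖1-μ‖)^2
      ≤ ((2*m*cR)) * ((1-m) * ‖1+μ‖)^2 := by
    rw [eL, eR]
    have h5 := mul_le_mul_of_nonneg_left hcore
      (mul_nonneg hcR.le (sq_nonneg (1-m)))
    nlinarith [h5]
  have hpos : (0:ℝ) < 2*m*cR := by positivity
  have hfin := (mul_le_mul_iff_of_pos_left hpos).mp hsq
  exact aux_sq_le (by positivity)
    (mul_nonneg (by linarith) (norm_nonneg _)) hfin

private lemma aux_div_eq (m cR ax aM D1 om : ℝ) (hax : ax ≠ 0) (haM : aM ≠ 0)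
    (hD1 : D1 ≠ 0) (hom : om ≠ 0) (hcR : cR ≠ 0) :
    (aM * (m / (cR * ax * aM))) / D1 * ((1+m) * D1 / om)
      = m * (1+m) / (cR * ax * om) := by
  field_simp

private lemma aux_entries (N : ℕ) (τ β : ℝ) (z : ℂ) (i k : Fin N) :
    (z • (1 : Matrix (Fin N) (Fin N) ℂ) - ((τ * β : ℝ) : ℂ) • (lmat N).map Complex.ofReal) i k
    = (if (i:ℕ) = (k:ℕ) then z + 2*((τ*β*((N:ℝ)+1)^2 : ℝ) : ℂ) else 0)
      + (if (i:ℕ)+1 = (k:ℕ) then -((τ*β*((N:ℝ)+1)^2 : ℝ) : ℂ) else 0)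
      + (if (k:ℕ)+1 = (i:ℕ) then -((τ*β*((N:ℝ)+1)^2 : ℝ) : ℂ) else 0) := by
  simp only [Matrix.sub_apply, Matrix.smul_apply, Matrix.one_apply, Matrix.map_apply,
    lmat, Matrix.of_apply, smul_eq_mul]
  by_cases h1 : (i:ℕ) = (k:ℕ)
  · rw [if_pos (Fin.ext h1), if_pos h1, if_pos h1, if_neg (by omega), if_neg (by omega)]
    push_cast
    ring
  · rw [if_neg (fun hh => h1 (congrArg Fin.val hh)), if_neg h1, if_neg h1]
    by_cases h2 : (i:ℕ)+1 = (k:ℕ)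
    · rw [if_pos h2, if_pos (Or.inl h2), if_neg (by omega)]
      push_cast
      ring
    · rw [if_neg h2]
      by_cases h3 : (k:ℕ)+1 = (i:ℕ)
      · rw [if_pos h3, if_pos (Or.inr h3)]
        push_cast
        ring
      · rw [if_neg h3, if_neg (by tauto)]
        push_cast
        ring

theorem stmt9 (N : ℕ) (hN : 1 ≤ N) (α τ β : ℝ)
    (hα0 : 0 < α) (hα : α ≤ Real.pi / 4) (hτ : 0 < τ) (hβ : 0 < β)
    (ρ : ℝ) (hρ : 0 < ρ) (z : ℂ)
    (hz : z = -((ρ : ℂ) * Complex.exp (↑α * Complex.I)) ∨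
          z = -((ρ : ℂ) * Complex.exp (-↑α * Complex.I))) :
    IsUnit (z • (1 : Matrix (Fin N) (Fin N) ℂ) -
        ((τ * β : ℝ) : ℂ) • (lmat N).map Complex.ofReal) ∧
      matNormC (z • (1 : Matrix (Fin N) (Fin N) ℂ) -
          ((τ * β : ℝ) : ℂ) • (lmat N).map Complex.ofReal)⁻¹
        ≤ 1 / (ρ * Real.sin (α / 2)) := by
  have hπ : (0:ℝ) < Real.pi := Real.pi_pos
  have hαπ : α < Real.pi := by nlinarith
  have hsinα : 0 < Real.sin α := Real.sin_pos_of_pos_of_lt_pi hα0 hαπ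
  have hsin2 : 0 < Real.sin (α/2) :=
    Real.sin_pos_of_pos_of_lt_pi (by linarith) (by linarith)
  have hneg : (-(α:ℂ)) * Complex.I = ((-α : ℝ) : ℂ) * Complex.I := by push_cast; ring
  have hzre : z.re = -(ρ * Real.cos α) := by
    rcases hz with hz | hz <;> rw [hz]
    · simp [Complex.exp_mul_I, Complex.mul_re, Complex.cos_ofReal_re, Complex.sin_ofReal_re]
    · simp [hneg, Complex.exp_mul_I, Complex.mul_re, Complex.cos_ofReal_re,
        Complex.sin_ofReal_re]
  have hzabs : ‖z‖ = ρ := by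
    rcases hz with hz | hz <;> rw [hz]
    · simp [Complex.norm_exp, abs_of_pos hρ]
    · simp [hneg, Complex.norm_exp, abs_of_pos hρ]
  have hzim : z.im ≠ 0 := by
    have hps : 0 < ρ * Real.sin α := mul_pos hρ hsinα
    rcases hz with hz | hz <;> rw [hz]
    · have him : (-((ρ : ℂ) * Complex.exp (↑α * Complex.I))).im = -(ρ * Real.sin α) := by
        simp [Complex.exp_mul_I, Complex.mul_im, Complex.cos_ofReal_re, Complex.sin_ofReal_re]
      rw [him]
      exact neg_ne_zero.2 hps.ne'
    · have him : (-((ρ : ℂ) * Complex.exp (-↑α * Complex.I))).im = ρ * Real.sin α := by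
        simp [hneg, Complex.exp_mul_I, Complex.mul_im, Complex.cos_ofReal_re,
          Complex.sin_ofReal_re]
      rw [him]
      exact hps.ne'
  set cR : ℝ := τ*β*((N:ℝ)+1)^2 with hcRdef
  have hcR : 0 < cR := by positivity
  have hc0 : ((cR:ℝ):ℂ) ≠ 0 := Complex.ofReal_ne_zero.2 hcR.ne'
  -- the root μ of the characteristic quadratic, with |μ| < 1
  obtain ⟨μ, hμroot, hμ0, hm1⟩ :
      ∃ μ : ℂ, (cR:ℂ)*μ^2 + (cR:ℂ) = (z+2*(cR:ℂ))*μ ∧ μ ≠ 0 ∧ ‖μ‖ < 1 := by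
    obtain ⟨s, hs⟩ := IsAlgClosed.exists_pow_nat_eq ((z+2*(cR:ℂ))^2 - 4*(cR:ℂ)^2)
      (n := 2) (by norm_num)
    set c : ℂ := (cR : ℂ) with hcdef
    set μ0 : ℂ := (z + 2*c + s)/(2*c) with hμ0def
    have hroot : c*μ0^2 + c = (z+2*c)*μ0 := by
      rw [hμ0def]; field_simp; linear_combination hs
    have hμ0ne : μ0 ≠ 0 := by
      intro h; rw [h] at hroot; simp at hroot; exact hc0 hroot
    have habsne : ‖μ0‖ ≠ 1 := by
      intro h1
      have hconj : μ0 * (starRingEnd ℂ) μ0 = 1 := by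
        rw [Complex.mul_conj]
        norm_cast
        rw [← Complex.sq_norm, h1]; norm_num
      have hsum : z + 2*c = c*μ0 + c*((starRingEnd ℂ) μ0) := by
        calc z + 2*c = (z+2*c) * (μ0 * (starRingEnd ℂ) μ0) := by rw [hconj]; ring
          _ = (c*μ0^2 + c) * (starRingEnd ℂ) μ0 := by
              linear_combination ((starRingEnd ℂ) μ0) * hroot.symm
          _ = c*μ0*(μ0 * (starRingEnd ℂ) μ0) + c*((starRingEnd ℂ) μ0) := by ring
          _ = c*μ0 + c*((starRingEnd ℂ) μ0) := by rw [hconj]; ring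
      have him := congrArg Complex.im hsum
      simp [Complex.add_im, Complex.mul_im, Complex.conj_im, Complex.conj_re,
        hcdef, Complex.ofReal_im, Complex.ofReal_re] at him
      exact hzim him
    rcases lt_or_gt_of_ne habsne with hlt | hgt
    · exact ⟨μ0, hroot, hμ0ne, hlt⟩
    · refine ⟨μ0⁻¹, ?_, inv_ne_zero hμ0ne, ?_⟩
      · have hi : μ0 * μ0⁻¹ = 1 := mul_inv_cancel₀ hμ0ne
        linear_combination (μ0⁻¹)^2 * hroot - (c*(1+μ0*μ0⁻¹) - (z+2*c)*μ0⁻¹) * hi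
      · rw [norm_inv, inv_lt_one_iff₀]
        right; exact hgt
  set m := ‖μ‖ with hmdef
  have hm0 : 0 < m := norm_pos_iff.2 hμ0
  have hzμ : (cR:ℂ)*(1-μ)^2 = z*μ := by linear_combination hμroot
  have hμne1 : (1:ℂ) - μ ≠ 0 := by
    intro h
    have hμ1 : μ = 1 := by linear_combination -h
    have habs1 : ‖μ‖ = 1 := by rw [hμ1, norm_one]
    rw [hmdef, habs1] at hm1
    exact lt_irrefl 1 hm1
  have ha1pos : 0 < ‖1-μ‖ := norm_pos_iff.2 hμne1
  have key2 : cR * (‖1-μ‖)^2 = ρ * m := by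
    have := congrArg (fun w : ℂ => ‖w‖) hzμ
    rwa [norm_mul, norm_mul, norm_pow, Complex.norm_real, Real.norm_eq_abs, abs_of_pos hcR, hzabs] at this
  have hIneqB := aux_ineqB z μ cR ρ α hcR hρ hα0 hαπ hzμ hzre hzabs hμ0 hm1
  -- nonvanishing denominators
  have hm2lt : m^2 < 1 := by nlinarith
  have habsx : ‖μ^2‖ = m^2 := by rw [norm_pow]
  have hx1 : (1:ℂ) - μ^2 ≠ 0 := by
    intro h
    have h2 : μ^2 = 1 := by linear_combination -h
    rw [h2] at habsx; simp at habsx; nlinarith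
  have hpowlt : (m^2)^(N+1) < 1 := pow_lt_one₀ (by positivity) hm2lt (Nat.succ_ne_zero N)
  have hxM : (1:ℂ) - (μ^2)^(N+1) ≠ 0 := by
    intro h
    have h2 : (μ^2)^(N+1) = 1 := by linear_combination -h
    have h3 := congrArg norm h2
    rw [norm_pow, habsx] at h3
    simp at h3
    nlinarith
  have haM : 0 < ‖1-(μ^2)^(N+1)‖ := norm_pos_iff.2 hxM
  have hax : 0 < ‖1-μ^2‖ := norm_pos_iff.2 hx1
  have hE : (cR:ℂ)*(1-μ^2)*(1-(μ^2)^(N+1)) ≠ 0 := mul_ne_zero (mul_ne_zero hc0 hx1) hxM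
  set Dinv : ℂ := μ / ((cR:ℂ)*(1-μ^2)*(1-(μ^2)^(N+1))) with hDdef
  have hDinv : Dinv * ((cR:ℂ)*(1-μ^2)*(1-(μ^2)^(N+1))) = μ := div_mul_cancel₀ _ hE
  set Amat := z • (1 : Matrix (Fin N) (Fin N) ℂ) -
      ((τ * β : ℝ) : ℂ) • (lmat N).map Complex.ofReal with hAmatdef
  set G : Matrix (Fin N) (Fin N) ℂ :=
    Matrix.of (fun i j => Gf N μ Dinv ((i:ℕ)+1) ((j:ℕ)+1)) with hGdef
  have hAG : Amat * G = 1 := by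
    apply mat_mul_green N z (cR:ℂ) Amat G ?_ (Gf N μ Dinv) (fun i j => rfl)
      (Gf_zero N μ Dinv) (Gf_top N μ Dinv)
      (green_rec N z (cR:ℂ) μ Dinv hE hDinv hμroot)
    intro i k
    rw [hAmatdef, hcRdef]
    exact aux_entries N τ β z i k
  refine ⟨(Matrix.isUnit_iff_isUnit_det Amat).2 (Matrix.isUnit_det_of_right_inverse hAG), ?_⟩
  have hInv : Amat⁻¹ = G := Matrix.inv_eq_right_inv hAG
  rw [hInv, matNormC]
  haveI : Nonempty (Fin N) := ⟨⟨0, by omega⟩⟩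
  apply ciSup_le
  intro i
  set I : ℕ := (i:ℕ) + 1 with hIdef
  have hI1 : 1 ≤ I := by omega
  have hIN : I ≤ N := by omega
  have hrow : ∑ j, ‖G i j‖
      = ∑ t ∈ Finset.range N, ‖Gf N μ Dinv I (t+1)‖ := by
    rw [← Fin.sum_univ_eq_sum_range (fun t => ‖Gf N μ Dinv I (t+1)‖) N]
    apply Finset.sum_congr rfl
    intro j _
    rw [hGdef]
    rfl
  rw [hrow]
  set D1 : ℝ := 1 - (m^2)^(N+1) with hD1def
  have hD1 : 0 < D1 := by rw [hD1def]; linarith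
  set CC : ℝ := ‖1-(μ^2)^(N+1)‖ * ‖Dinv‖ with hCCdef
  have hterm : ∀ t ∈ Finset.range N, ‖Gf N μ Dinv I (t+1)‖
      ≤ (CC / D1) * (m^(max I (t+1) - min I (t+1)) * (1+(m^2)^(min I (t+1)))
          * (1+(m^2)^((N+1) - max I (t+1)))) := by
    intro t _
    rw [div_mul_eq_mul_div, le_div_iff₀ hD1]
    exact Gf_abs_bound N μ Dinv hm1 hxM I (t+1)
  have hsum1 : ∑ t ∈ Finset.range N, ‖Gf N μ Dinv I (t+1)‖
      ≤ (CC / D1) * ∑ t ∈ Finset.range N, (m^(max I (t+1) - min I (t+1))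
          * (1+(m^2)^(min I (t+1))) * (1+(m^2)^((N+1) - max I (t+1)))) := by
    rw [Finset.mul_sum]
    exact Finset.sum_le_sum hterm
  have hsum2 := sum_bound N I m (norm_nonneg μ) hm1 hI1 hIN
  have hsumT : ∑ t ∈ Finset.range N, (m^(max I (t+1) - min I (t+1))
        * (1+(m^2)^(min I (t+1))) * (1+(m^2)^((N+1) - max I (t+1))))
      ≤ (1+m) * D1 / (1-m) := by
    rw [le_div_iff₀ (by linarith : (0:ℝ) < 1-m)]
    rw [hD1def]
    exact hsum2
  have habsD : ‖Dinv‖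
      = m / (cR * ‖1-μ^2‖ * ‖1-(μ^2)^(N+1)‖) := by
    rw [hDdef, norm_div, norm_mul, norm_mul, Complex.norm_real, Real.norm_eq_abs, abs_of_pos hcR]
  have hCC0 : 0 ≤ CC / D1 := by positivity
  have hchain : ∑ t ∈ Finset.range N, ‖Gf N μ Dinv I (t+1)‖
      ≤ (CC / D1) * ((1+m) * D1 / (1-m)) :=
    le_trans hsum1 (mul_le_mul_of_nonneg_left hsumT hCC0)
  have heq : (CC / D1) * ((1+m) * D1 / (1-m))
      = m * (1+m) / (cR * ‖1-μ^2‖ * (1-m)) := by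
    rw [hCCdef, habsD]
    exact aux_div_eq m cR (‖1-μ^2‖) (‖1-(μ^2)^(N+1)‖) D1 (1-m)
      hax.ne' haM.ne' hD1.ne' (by linarith) hcR.ne'
  rw [heq] at hchain
  refine le_trans hchain ?_
  -- final comparison
  have hxfac : ‖1-μ^2‖ = ‖1-μ‖ * ‖1+μ‖ := by
    rw [← norm_mul]
    congr 1
    ring
  have hm1' : (0:ℝ) < 1 - m := by linarith
  rw [div_le_div_iff₀ (by positivity) (by positivity)]
  have e8 : m*(1+m)*(ρ*Real.sin (α/2))
      = (cR * ‖1-μ‖) * (Real.sin (α/2)*(1+m)*‖1-μ‖) := by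
    linear_combination ((1+m)*Real.sin (α/2)) * key2.symm
  calc m*(1+m)*(ρ*Real.sin (α/2))
      = (cR * ‖1-μ‖) * (Real.sin (α/2)*(1+m)*‖1-μ‖) := e8
    _ ≤ (cR * ‖1-μ‖) * ((1-m)*‖1+μ‖) :=
        mul_le_mul_of_nonneg_left hIneqB (by positivity)
    _ = 1 * (cR * (‖1-μ‖ * ‖1+μ‖) * (1-m)) := by ring
    _ = 1 * (cR * ‖1-μ^2‖ * (1-m)) := by rw [hxfac]
end

section
/- Let N_j ≥ 1, Δx_j = 1/(N_j+1), L_{N_j} = (1/Δx_j²)·tridiag(1,−2,1), let 0 < α ≤ π/4, τ > 0, and let 0 < β_j ≤ β and 0 < Δx ≤ Δx_j. Set r* = 8βτ/Δx². For every z = −r*·e^{iθ} with |θ| ≤ α, the matrix zI − τβ_j L_{N_j} is invertible and ‖(zI − τβ_j L_{N_j})⁻¹‖_∞ ≤ 2/r*. -/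
open scoped BigOperators

open Finset in
lemma diag_dom_bound {n : ℕ} (M : Matrix (Fin n) (Fin n) ℂ) (δ : ℝ) (hδ : 0 ≤ δ)
    (hdom : ∀ i, (∑ j ∈ univ.erase i, ‖M i j‖) + δ ≤ ‖M i i‖)
    (x y : Fin n → ℂ) (hxy : M.mulVec y = x) (c : ℝ) (hx : ∀ j, ‖x j‖ ≤ c)
    (i : Fin n) : δ * ‖y i‖ ≤ c := by
  obtain ⟨m, -, hm⟩ := Finset.exists_max_image univ (fun j => ‖y j‖) ⟨i, mem_univ i⟩
  have hmax : ∀ j, ‖y j‖ ≤ ‖y m‖ := fun j => hm j (mem_univ j)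
  have hsum : M m m * y m + ∑ j ∈ univ.erase m, M m j * y j = x m := by
    rw [Finset.add_sum_erase _ (fun j => M m j * y j) (mem_univ m)]
    simpa [Matrix.mulVec, dotProduct] using congrFun hxy m
  have hS : ‖∑ j ∈ univ.erase m, M m j * y j‖
      ≤ (∑ j ∈ univ.erase m, ‖M m j‖) * ‖y m‖ := by
    calc ‖∑ j ∈ univ.erase m, M m j * y j‖
        ≤ ∑ j ∈ univ.erase m, ‖M m j * y j‖ := norm_sum_le _ _
      _ ≤ ∑ j ∈ univ.erase m, ‖M m j‖ * ‖y m‖ := by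
          refine Finset.sum_le_sum fun j _ => ?_
          rw [norm_mul]
          exact mul_le_mul_of_nonneg_left (hmax j) (norm_nonneg _)
      _ = _ := by rw [Finset.sum_mul]
  have h1 : ‖M m m‖ * ‖y m‖
      ≤ ‖x m‖ + (∑ j ∈ univ.erase m, ‖M m j‖) * ‖y m‖ := by
    rw [← norm_mul]
    have heq : M m m * y m = x m - ∑ j ∈ univ.erase m, M m j * y j := by
      rw [← hsum]; ring
    rw [heq]
    calc ‖x m - ∑ j ∈ univ.erase m, M m j * y j‖
        = ‖x m + -(∑ j ∈ univ.erase m, M m j * y j)‖ := by rw [sub_eq_add_neg]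
      _ ≤ ‖x m‖ + ‖-(∑ j ∈ univ.erase m, M m j * y j)‖ :=
          norm_add_le _ _
      _ = ‖x m‖ + ‖∑ j ∈ univ.erase m, M m j * y j‖ := by rw [norm_neg]
      _ ≤ _ := add_le_add_right hS _
  have hkey : δ * ‖y m‖ ≤ ‖x m‖ := by
    have h2 := mul_le_mul_of_nonneg_right (hdom m) (norm_nonneg (y m))
    nlinarith [norm_nonneg (y m)]
  calc δ * ‖y i‖ ≤ δ * ‖y m‖ := mul_le_mul_of_nonneg_left (hmax i) hδ
    _ ≤ ‖x m‖ := hkey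
    _ ≤ c := hx m

open Finset in
lemma diag_dom_inv {n : ℕ} [NeZero n] (M : Matrix (Fin n) (Fin n) ℂ) (δ : ℝ) (hδ : 0 < δ)
    (hdom : ∀ i, (∑ j ∈ univ.erase i, ‖M i j‖) + δ ≤ ‖M i i‖) :
    IsUnit M ∧ matNormC M⁻¹ ≤ 1 / δ := by
  have hdet : M.det ≠ 0 := by
    intro h
    obtain ⟨v, hv0, hv⟩ := (Matrix.exists_mulVec_eq_zero_iff).2 h
    apply hv0
    funext i
    have hb := diag_dom_bound M δ hδ.le hdom 0 v hv 0 (fun j => by simp) i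
    have h0 : ‖v i‖ = 0 :=
      le_antisymm (by nlinarith [norm_nonneg (v i)]) (norm_nonneg _)
    simpa using norm_eq_zero.1 h0
  have hU : IsUnit M := (Matrix.isUnit_iff_isUnit_det M).2 (isUnit_iff_ne_zero.2 hdet)
  refine ⟨hU, ?_⟩
  have hMB : M * M⁻¹ = 1 := Matrix.mul_nonsing_inv M (isUnit_iff_ne_zero.2 hdet)
  have hne : Nonempty (Fin n) := ⟨⟨0, Nat.pos_of_ne_zero (NeZero.ne n)⟩⟩
  unfold matNormC
  apply ciSup_le
  intro i
  set B := M⁻¹ with hB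
  set x : Fin n → ℂ := fun j => if B i j = 0 then 0
    else (starRingEnd ℂ) (B i j) / ((‖B i j‖ : ℝ) : ℂ) with hxdef
  have hx : ∀ j, ‖x j‖ ≤ 1 := by
    intro j
    by_cases h : B i j = 0
    · simp [hxdef, h]
    · have h1 : ‖B i j‖ ≠ 0 := norm_ne_zero_iff.mpr h
      simp [hxdef, h, map_div₀, Complex.norm_conj, Complex.norm_real, Real.norm_eq_abs,
        abs_of_nonneg (norm_nonneg (B i j)), div_self h1]
  have hterm : ∀ j, B i j * x j = ((‖B i j‖ : ℝ) : ℂ) := by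
    intro j
    by_cases h : B i j = 0
    · simp [hxdef, h]
    · have h1 : ((‖B i j‖ : ℝ) : ℂ) ≠ 0 := by
        simpa using norm_ne_zero_iff.mpr h
      simp only [hxdef, if_neg h]
      rw [mul_div_assoc', Complex.mul_conj, Complex.normSq_eq_norm_sq]
      rw [div_eq_iff h1]
      push_cast
      ring
  set y := B.mulVec x with hy
  have hMy : M.mulVec y = x := by
    rw [hy, Matrix.mulVec_mulVec, hMB, Matrix.one_mulVec]
  have hyi : y i = ((∑ j, ‖B i j‖ : ℝ) : ℂ) := by
    rw [hy]
    simp only [Matrix.mulVec, dotProduct]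
    rw [Finset.sum_congr rfl (fun j _ => hterm j)]
    push_cast
    rfl
  have hb := diag_dom_bound M δ hδ.le hdom x y hMy 1 hx i
  rw [hyi, Complex.norm_real, Real.norm_eq_abs,
    abs_of_nonneg (Finset.sum_nonneg fun j _ => norm_nonneg _)] at hb
  rw [le_div_iff₀ hδ] at *
  linarith

open Finset in
lemma indicator_sum_le {n : ℕ} (a : ℝ) (ha : 0 ≤ a) (p : Fin n → Prop) [DecidablePred p]
    (hp : ∀ x y, p x → p y → x = y) :
    ∑ j : Fin n, (if p j then a else 0) ≤ a := by
  rw [← Finset.sum_filter]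
  rw [Finset.sum_const, nsmul_eq_mul]
  have hc : (univ.filter p).card ≤ 1 :=
    Finset.card_le_one.2 fun x hx y hy => hp x y (by simpa using hx) (by simpa using hy)
  calc ((univ.filter p).card : ℝ) * a ≤ 1 * a := by
        apply mul_le_mul_of_nonneg_right _ ha
        exact_mod_cast hc
    _ = a := one_mul a

theorem stmt10 (Nj : ℕ) (hNj : 1 ≤ Nj) (α τ β βj Δx : ℝ)
    (hα0 : 0 < α) (hα : α ≤ Real.pi / 4) (hτ : 0 < τ)
    (hβj : 0 < βj) (hβ : βj ≤ β)
    (hΔx0 : 0 < Δx) (hΔx : Δx ≤ 1 / ((Nj : ℝ) + 1))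
    (θ : ℝ) (hθ : |θ| ≤ α) (z : ℂ)
    (hz : z = -(((8 * β * τ / Δx ^ 2 : ℝ) : ℂ) * Complex.exp (↑θ * Complex.I))) :
    IsUnit (z • (1 : Matrix (Fin Nj) (Fin Nj) ℂ) -
        ((τ * βj : ℝ) : ℂ) • (lmat Nj).map Complex.ofReal) ∧
      matNormC (z • (1 : Matrix (Fin Nj) (Fin Nj) ℂ) -
          ((τ * βj : ℝ) : ℂ) • (lmat Nj).map Complex.ofReal)⁻¹
        ≤ 2 / (8 * β * τ / Δx ^ 2) := by
  haveI : NeZero Nj := ⟨by omega⟩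
  have hβ0 : 0 < β := hβj.trans_le hβ
  set r : ℝ := 8 * β * τ / Δx ^ 2 with hr
  set a : ℝ := τ * βj * ((Nj : ℝ) + 1) ^ 2 with hadef
  have hN1 : (0:ℝ) < (Nj : ℝ) + 1 := by positivity
  have ha : 0 < a := by
    rw [hadef]; positivity
  have hrpos : 0 < r := by
    rw [hr]; positivity
  have hr8a : 8 * a ≤ r := by
    have h1 : Δx * ((Nj : ℝ) + 1) ≤ 1 := by
      rw [div_eq_mul_inv] at hΔx
      calc Δx * ((Nj:ℝ)+1) ≤ 1 * ((Nj:ℝ)+1)⁻¹ * ((Nj:ℝ)+1) := by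
            apply mul_le_mul_of_nonneg_right hΔx hN1.le
        _ = 1 := by field_simp
    have h2 : ((Nj : ℝ) + 1) ^ 2 ≤ 1 / Δx ^ 2 := by
      rw [le_div_iff₀ (by positivity)]
      have h1' := mul_le_mul h1 h1 (mul_nonneg hΔx0.le hN1.le) zero_le_one
      nlinarith
    have h4 : τ * βj ≤ τ * β := mul_le_mul_of_nonneg_left hβ hτ.le
    have h5 := mul_le_mul h4 h2 (by positivity) (mul_nonneg hτ.le hβ0.le)
    rw [hr, hadef]
    rw [div_eq_mul_inv] at h5 ⊢
    nlinarith [sq_nonneg Δx, inv_nonneg.2 (sq_nonneg Δx)]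
  set M : Matrix (Fin Nj) (Fin Nj) ℂ := z • (1 : Matrix (Fin Nj) (Fin Nj) ℂ) -
      ((τ * βj : ℝ) : ℂ) • (lmat Nj).map Complex.ofReal with hM
  -- diagonal entries
  have hdiagval : ∀ i : Fin Nj, M i i = z + ((2 * a : ℝ) : ℂ) := by
    intro i
    simp only [hM, Matrix.sub_apply, Matrix.smul_apply, Matrix.one_apply_eq,
      Matrix.map_apply, lmat, Matrix.of_apply, if_pos rfl, smul_eq_mul, hadef]
    push_cast
    ring
  have hdiag : ∀ i : Fin Nj, r / 2 + 2 * a ≤ ‖M i i‖ := by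
    intro i
    rw [hdiagval i]
    have hre : (z + ((2 * a : ℝ) : ℂ)).re = 2 * a - r * Real.cos θ := by
      simp [hz, Complex.mul_re, Complex.exp_ofReal_mul_I_re, Complex.exp_ofReal_mul_I_im]
      ring
    have him : (z + ((2 * a : ℝ) : ℂ)).im = -(r * Real.sin θ) := by
      simp [hz, Complex.mul_im, Complex.exp_ofReal_mul_I_re, Complex.exp_ofReal_mul_I_im]
    have hs := Real.sin_sq_add_cos_sq θ
    have key : (2*a - r*Real.cos θ)*(2*a - r*Real.cos θ)
        + (-(r*Real.sin θ))*(-(r*Real.sin θ)) = 4*a^2 - 4*a*r*Real.cos θ + r^2 := by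
      linear_combination r ^ 2 * hs
    have h5 : 0 ≤ r * (r - 8 * a) := mul_nonneg hrpos.le (by linarith)
    have h6 : 0 ≤ a * r * (1 - Real.cos θ) :=
      mul_nonneg (mul_nonneg ha.le hrpos.le) (sub_nonneg.2 (Real.cos_le_one θ))
    have hsq : (r / 2 + 2 * a) ^ 2 ≤ ‖z + ((2 * a : ℝ) : ℂ)‖ ^ 2 := by
      rw [Complex.sq_norm, Complex.normSq_apply, hre, him, key]
      nlinarith
    have h0 : (0:ℝ) ≤ r / 2 + 2 * a := by positivity
    exact (pow_le_pow_iff_left₀ h0 (norm_nonneg _) two_ne_zero).1 hsq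
  -- off-diagonal row sums
  have hoff : ∀ i : Fin Nj, ∑ j ∈ Finset.univ.erase i, ‖M i j‖ ≤ 2 * a := by
    intro i
    have hval : ∀ j ∈ Finset.univ.erase i, ‖M i j‖
        = if ((i : ℕ) + 1 = (j : ℕ) ∨ (j : ℕ) + 1 = (i : ℕ)) then a else 0 := by
      intro j hj
      have hij : j ≠ i := Finset.ne_of_mem_erase hj
      have hijn : (i : ℕ) ≠ (j : ℕ) := fun h => hij (Fin.ext h.symm)
      have hMij : M i j = -(((τ * βj * (((Nj:ℝ)+1)^2 *
          (if ((i:ℕ)+1 = (j:ℕ) ∨ (j:ℕ)+1 = (i:ℕ)) then (1:ℝ) else 0)) : ℝ)) : ℂ) := by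
        simp only [hM, Matrix.sub_apply, Matrix.smul_apply, Matrix.one_apply,
          if_neg (fun h : i = j => hij h.symm), Matrix.map_apply, lmat, Matrix.of_apply,
          if_neg hijn, smul_eq_mul, mul_zero, zero_sub]
        push_cast
        ring
      rw [hMij, norm_neg, Complex.norm_real, Real.norm_eq_abs]
      by_cases hadj : (i : ℕ) + 1 = (j : ℕ) ∨ (j : ℕ) + 1 = (i : ℕ)
      · rw [if_pos hadj, if_pos hadj, mul_one,
          abs_of_pos (mul_pos (mul_pos hτ hβj) (by positivity))]
      · rw [if_neg hadj, if_neg hadj, mul_zero, mul_zero, abs_zero]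
    rw [Finset.sum_congr rfl hval]
    have hsub : ∑ j ∈ Finset.univ.erase i,
          (if ((i : ℕ) + 1 = (j : ℕ) ∨ (j : ℕ) + 1 = (i : ℕ)) then a else 0)
        ≤ ∑ j : Fin Nj, (if ((i : ℕ) + 1 = (j : ℕ) ∨ (j : ℕ) + 1 = (i : ℕ)) then a else 0) := by
      apply Finset.sum_le_sum_of_subset_of_nonneg (Finset.erase_subset _ _)
      intro j _ _
      split <;> [exact ha.le; exact le_refl 0]
    refine hsub.trans ?_
    have hsplit : ∀ j : Fin Nj,
        (if ((i : ℕ) + 1 = (j : ℕ) ∨ (j : ℕ) + 1 = (i : ℕ)) then a else 0)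
        ≤ (if (i : ℕ) + 1 = (j : ℕ) then a else 0) + (if (j : ℕ) + 1 = (i : ℕ) then a else 0) := by
      intro j
      by_cases h1 : (i : ℕ) + 1 = (j : ℕ) <;> by_cases h2 : (j : ℕ) + 1 = (i : ℕ) <;>
        simp [h1, h2, ha.le]
    calc ∑ j : Fin Nj, (if ((i : ℕ) + 1 = (j : ℕ) ∨ (j : ℕ) + 1 = (i : ℕ)) then a else 0)
        ≤ ∑ j : Fin Nj, ((if (i : ℕ) + 1 = (j : ℕ) then a else 0)
            + (if (j : ℕ) + 1 = (i : ℕ) then a else 0)) := Finset.sum_le_sum fun j _ => hsplit j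
      _ = (∑ j : Fin Nj, (if (i : ℕ) + 1 = (j : ℕ) then a else 0))
            + ∑ j : Fin Nj, (if (j : ℕ) + 1 = (i : ℕ) then a else 0) := Finset.sum_add_distrib
      _ ≤ a + a := by
          apply add_le_add
          · exact indicator_sum_le a ha.le _ fun x y hx hy => Fin.ext (by omega)
          · exact indicator_sum_le a ha.le _ fun x y hx hy => Fin.ext (by omega)
      _ = 2 * a := by ring
  have hdom : ∀ i : Fin Nj,
      (∑ j ∈ Finset.univ.erase i, ‖M i j‖) + r / 2 ≤ ‖M i i‖ := by
    intro i
    have h1 := hdiag i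
    have h2 := hoff i
    linarith
  obtain ⟨hU, hbound⟩ := diag_dom_inv M (r / 2) (by positivity) hdom
  refine ⟨hU, ?_⟩
  calc matNormC M⁻¹ ≤ 1 / (r / 2) := hbound
    _ = 2 / r := one_div_div r 2
end
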